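/- arXiv:2505.03607 — 10 statements merged into one kernel-verified Lean document; each statement's English description precedes it below -/
import Mathlib

section
/- If ‖h‖_{p,Q} < ∞ for some p > 2 and I_α(P‖Q) < ∞ for some α ≥ 2p/(p−2), then for i.i.d. X̃_1,…,X̃_n ∼ Q, the likelihood ratio estimator h̄_n = (1/n)∑ h(X̃_i) l(X̃_i) satisfies, for all δ ∈ (0,1): Pr( |h̄_n − E_P[h]| ≤ (2/√(nδ)) ‖h‖_{p,Q} I_α(P‖Q)^{1/α} ) ≥ 1 − δ. -/
open MeasureTheory ProbabilityTheory

noncomputable def lr {X : Type*} [MeasurableSpace X] (P Q : Measure X) (x : X) : ℝ :=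
  (P.rnDeriv Q x).toReal

noncomputable def Ialpha {X : Type*} [MeasurableSpace X] (P Q : Measure X) (α : ℝ) : ℝ :=
  ∫ x, lr P Q x ^ α ∂Q

/-- The `p`-norm of `h` w.r.t. the measure `Q`. -/
noncomputable def pNorm {X : Type*} [MeasurableSpace X] (h : X → ℝ) (p : ℝ) (Q : Measure X) : ℝ :=
  (∫ x, |h x| ^ p ∂Q) ^ (1 / p)

private lemma aux_alg {n δ c t : ℝ} (hn : 0 < n) (hδ : 0 < δ)
    (ht2 : t ^ 2 = 4 * c ^ 2 / (n * δ)) : n * c ^ 2 ≤ δ * (n * t) ^ 2 := by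
  have hkey : δ * (n * t) ^ 2 = 4 * n * c ^ 2 := by
    rw [mul_pow, ht2]
    field_simp
  rw [hkey]
  nlinarith [mul_nonneg hn.le (sq_nonneg c)]

/-- Polynomial concentration bound for the classical likelihood-ratio estimator
under a `p`-norm condition on `h`. -/
theorem lr_estimator_polynomial_concentration_pNorm
    {X : Type*} [MeasurableSpace X] {Ω : Type*} [MeasurableSpace Ω]
    (P Q : Measure X) [IsProbabilityMeasure P] [IsProbabilityMeasure Q]
    (hPQ : P ≪ Q) (h : X → ℝ) (hmeas : Measurable h)
    (p : ℝ) (hp : 2 < p) (hpnorm : Integrable (fun x => |h x| ^ p) Q)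
    (α : ℝ) (hα : 2 * p / (p - 2) ≤ α)
    (hI : Integrable (fun x => lr P Q x ^ α) Q)
    (μ : Measure Ω) [IsProbabilityMeasure μ]
    (n : ℕ) (hn : 0 < n) (Xs : Fin n → Ω → X)
    (hXmeas : ∀ i, Measurable (Xs i))
    (hid : ∀ i, Measure.map (Xs i) μ = Q)
    (hindep : iIndepFun Xs μ)
    (δ : ℝ) (hδ0 : 0 < δ) (hδ1 : δ < 1) :
    ENNReal.ofReal (1 - δ) ≤
      μ {ω | |(1 / (n : ℝ)) * ∑ i, h (Xs i ω) * lr P Q (Xs i ω) - ∫ x, h x ∂P| ≤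
        (2 / Real.sqrt ((n : ℝ) * δ)) * pNorm h p Q * Ialpha P Q α ^ (1 / α)} := by
  have hp0 : (0:ℝ) < p := by linarith
  have hp2 : (0:ℝ) < p - 2 := by linarith
  have hn0 : (0:ℝ) < (n:ℝ) := by exact_mod_cast hn
  set l : X → ℝ := lr P Q with hl_def
  have hl_meas : Measurable l := (Measure.measurable_rnDeriv P Q).ennreal_toReal
  have hl_nonneg : ∀ x, 0 ≤ l x := fun x => ENNReal.toReal_nonneg
  set g : X → ℝ := fun x => h x * l x with hg_def
  have hg_meas : Measurable g := hmeas.mul hl_meas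
  set β : ℝ := 2 * p / (p - 2) with hβ_def
  have hβ2 : (2:ℝ) < β := by
    rw [hβ_def, lt_div_iff₀ hp2]; linarith
  have hβ_pos : (0:ℝ) < β := by linarith
  have hα_pos : (0:ℝ) < α := lt_of_lt_of_le hβ_pos hα
  -- MemLp facts
  have hMh : MemLp h (ENNReal.ofReal p) Q := by
    have hiff := (memLp_norm_rpow_iff (p := ENNReal.ofReal p) (q := ENNReal.ofReal p) (μ := Q)
      hmeas.aestronglyMeasurable (by simp [ENNReal.ofReal_eq_zero]; linarith)
      ENNReal.ofReal_ne_top)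
    rw [ENNReal.div_self (by simp [ENNReal.ofReal_eq_zero]; linarith) ENNReal.ofReal_ne_top]
      at hiff
    have hint : Integrable (fun x => ‖h x‖ ^ (ENNReal.ofReal p).toReal) Q := by
      simpa [ENNReal.toReal_ofReal hp0.le, Real.norm_eq_abs] using hpnorm
    exact hiff.1 (memLp_one_iff_integrable.2 hint)
  have hMlα : MemLp l (ENNReal.ofReal α) Q := by
    have hiff := (memLp_norm_rpow_iff (p := ENNReal.ofReal α) (q := ENNReal.ofReal α) (μ := Q)
      hl_meas.aestronglyMeasurable (by simp [ENNReal.ofReal_eq_zero]; linarith)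
      ENNReal.ofReal_ne_top)
    rw [ENNReal.div_self (by simp [ENNReal.ofReal_eq_zero]; linarith) ENNReal.ofReal_ne_top]
      at hiff
    have hint : Integrable (fun x => ‖l x‖ ^ (ENNReal.ofReal α).toReal) Q := by
      have : (fun x => ‖l x‖ ^ (ENNReal.ofReal α).toReal) = fun x => l x ^ α := by
        funext x
        rw [ENNReal.toReal_ofReal hα_pos.le, Real.norm_of_nonneg (hl_nonneg x)]
      rw [this]; exact hI
    exact hiff.1 (memLp_one_iff_integrable.2 hint)
  have hMlβ : MemLp l (ENNReal.ofReal β) Q :=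
    ⟨hMlα.1, lt_of_le_of_lt
      (eLpNorm_le_eLpNorm_of_exponent_le (ENNReal.ofReal_le_ofReal hα) hMlα.1) hMlα.2⟩
  -- MemLp g 2
  have hexp : (1:ENNReal) / 2 = 1 / ENNReal.ofReal p + 1 / ENNReal.ofReal β := by
    rw [one_div, one_div, one_div, ← ENNReal.ofReal_inv_of_pos hp0,
      ← ENNReal.ofReal_inv_of_pos hβ_pos,
      ← ENNReal.ofReal_add (by positivity) (by positivity)]
    have h2 : p⁻¹ + β⁻¹ = 2⁻¹ := by
      rw [hβ_def]; field_simp; ring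
    rw [h2, ENNReal.ofReal_inv_of_pos (by norm_num : (0:ℝ) < 2)]
    norm_num
  have hMg : MemLp g 2 Q := by
    haveI : ENNReal.HolderTriple (ENNReal.ofReal p) (ENNReal.ofReal β) 2 :=
      ⟨by simpa only [one_div] using hexp.symm⟩
    exact MemLp.smul (φ := h) (f := l) hMlβ hMh
  -- constants
  have hintp0 : 0 ≤ ∫ x, |h x| ^ p ∂Q := integral_nonneg fun x => by positivity
  have hintα0 : 0 ≤ ∫ x, l x ^ α ∂Q :=
    integral_nonneg fun x => Real.rpow_nonneg (hl_nonneg x) _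
  set A : ℝ := pNorm h p Q with hA_def
  set B : ℝ := Ialpha P Q α ^ (1 / α) with hB_def
  have hA_eq : A = (∫ x, |h x| ^ p ∂Q) ^ (1/p) := rfl
  have hB_eq : B = (∫ x, l x ^ α ∂Q) ^ (1/α) := rfl
  have hA0 : 0 ≤ A := by rw [hA_eq]; positivity
  have hB0 : 0 ≤ B := by
    rw [hB_eq]; exact Real.rpow_nonneg hintα0 _
  set C : ℝ := A * B with hC_def
  have hC0 : 0 ≤ C := mul_nonneg hA0 hB0
  -- Hölder bound on the second moment of g
  have hpq : Real.HolderConjugate (p/2) (β/2) := by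
    rw [Real.holderConjugate_iff]
    constructor
    · rw [lt_div_iff₀ (by norm_num : (0:ℝ) < 2)]; linarith
    · rw [hβ_def]; field_simp; ring
  have he2 : ((2:ENNReal)).toReal = (2:ℝ) := by simp
  have hMh2 : MemLp (fun x => h x ^ 2) (ENNReal.ofReal (p/2)) Q := by
    have h1 := hMh.norm_rpow_div 2
    have he : ENNReal.ofReal p / 2 = ENNReal.ofReal (p/2) := by
      rw [ENNReal.ofReal_div_of_pos (by norm_num : (0:ℝ) < 2), ENNReal.ofReal_ofNat]
    have hfe : (fun x => ‖h x‖ ^ ((2:ENNReal)).toReal) = fun x => h x ^ 2 := by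
      funext x
      rw [he2, Real.rpow_two, Real.norm_eq_abs, sq_abs]
    rw [he, hfe] at h1
    exact h1
  have hMl2 : MemLp (fun x => l x ^ 2) (ENNReal.ofReal (β/2)) Q := by
    have h1 := hMlβ.norm_rpow_div 2
    have he : ENNReal.ofReal β / 2 = ENNReal.ofReal (β/2) := by
      rw [ENNReal.ofReal_div_of_pos (by norm_num : (0:ℝ) < 2), ENNReal.ofReal_ofNat]
    have hfe : (fun x => ‖l x‖ ^ ((2:ENNReal)).toReal) = fun x => l x ^ 2 := by
      funext x
      rw [he2, Real.rpow_two, Real.norm_eq_abs, sq_abs]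
    rw [he, hfe] at h1
    exact h1
  have hHolder : ∫ x, (h x ^ 2) * (l x ^ 2) ∂Q ≤
      (∫ x, (h x ^ 2) ^ (p/2) ∂Q) ^ (1/(p/2)) * (∫ x, (l x ^ 2) ^ (β/2) ∂Q) ^ (1/(β/2)) :=
    integral_mul_le_Lp_mul_Lq_of_nonneg hpq (ae_of_all _ fun x => sq_nonneg _)
      (ae_of_all _ fun x => sq_nonneg _) hMh2 hMl2
  have hint1 : ∫ x, (h x ^ 2) ^ (p/2) ∂Q = ∫ x, |h x| ^ p ∂Q := by
    refine integral_congr_ae (ae_of_all _ fun x => ?_)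
    show (h x ^ 2) ^ (p/2) = |h x| ^ p
    rw [← sq_abs, ← Real.rpow_two, ← Real.rpow_mul (abs_nonneg _)]
    congr 1
    ring
  have hint2 : ∫ x, (l x ^ 2) ^ (β/2) ∂Q = ∫ x, l x ^ β ∂Q := by
    refine integral_congr_ae (ae_of_all _ fun x => ?_)
    show (l x ^ 2) ^ (β/2) = l x ^ β
    rw [← Real.rpow_two, ← Real.rpow_mul (hl_nonneg x)]
    congr 1
    ring
  have hintβ0 : 0 ≤ ∫ x, l x ^ β ∂Q :=
    integral_nonneg fun x => Real.rpow_nonneg (hl_nonneg x) _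
  have hA2 : (∫ x, |h x| ^ p ∂Q) ^ (1/(p/2)) = A ^ 2 := by
    rw [hA_eq, ← Real.rpow_two, ← Real.rpow_mul hintp0]
    congr 1
    field_simp
  have hnorml : ∀ γ : ℝ, ∫ x, ‖l x‖ ^ γ ∂Q = ∫ x, l x ^ γ ∂Q := fun γ =>
    integral_congr_ae (ae_of_all _ fun x => by
      show ‖l x‖ ^ γ = l x ^ γ
      rw [Real.norm_of_nonneg (hl_nonneg x)])
  have hLy : (∫ x, l x ^ β ∂Q) ^ (1/(β/2)) ≤ B ^ 2 := by
    have hle : eLpNorm l (ENNReal.ofReal β) Q ≤ eLpNorm l (ENNReal.ofReal α) Q :=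
      eLpNorm_le_eLpNorm_of_exponent_le (ENNReal.ofReal_le_ofReal hα) hMlα.1
    rw [hMlβ.eLpNorm_eq_integral_rpow_norm (by simp [ENNReal.ofReal_eq_zero]; linarith)
        ENNReal.ofReal_ne_top,
      hMlα.eLpNorm_eq_integral_rpow_norm (by simp [ENNReal.ofReal_eq_zero]; linarith)
        ENNReal.ofReal_ne_top,
      ENNReal.toReal_ofReal hβ_pos.le, ENNReal.toReal_ofReal hα_pos.le,
      hnorml β, hnorml α] at hle
    rw [ENNReal.ofReal_le_ofReal_iff (by positivity)] at hle
    have hsq : ((∫ x, l x ^ β ∂Q) ^ (β⁻¹)) ^ 2 ≤ B ^ 2 := by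
      apply pow_le_pow_left₀ (by positivity)
      rw [hB_eq, one_div]
      exact hle
    calc (∫ x, l x ^ β ∂Q) ^ (1/(β/2))
        = ((∫ x, l x ^ β ∂Q) ^ (β⁻¹)) ^ 2 := by
          rw [← Real.rpow_two, ← Real.rpow_mul hintβ0]
          congr 1
          field_simp
      _ ≤ B ^ 2 := hsq
  have hgsq_int : ∫ x, g x ^ 2 ∂Q ≤ C ^ 2 := by
    have hco : ∫ x, g x ^ 2 ∂Q = ∫ x, (h x ^ 2) * (l x ^ 2) ∂Q := by
      refine integral_congr_ae (ae_of_all _ fun x => ?_)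
      rw [hg_def]; ring
    rw [hco, hC_def, mul_pow]
    refine le_trans hHolder ?_
    rw [hint1, hint2, hA2]
    exact mul_le_mul_of_nonneg_left hLy (sq_nonneg A)
  -- identify the mean
  set m : ℝ := ∫ x, g x ∂Q with hm_set
  have hm_def : ∫ x, h x ∂P = m := by
    rw [hm_set, ← MeasureTheory.integral_rnDeriv_smul hPQ]
    refine integral_congr_ae (ae_of_all _ fun x => ?_)
    simp [hg_def, hl_def, lr, smul_eq_mul, mul_comm]
  -- random variables
  set Y : Fin n → Ω → ℝ := fun i => g ∘ Xs i with hY_def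
  have hgasm : ∀ i, AEStronglyMeasurable g (Measure.map (Xs i) μ) := fun i => by
    rw [hid i]; exact hg_meas.aestronglyMeasurable
  have hYmem : ∀ i, MemLp (Y i) 2 μ := fun i =>
    (memLp_map_measure_iff (hgasm i) (hXmeas i).aemeasurable).1 (by rw [hid i]; exact hMg)
  have hYint_eq : ∀ i, ∫ ω, Y i ω ∂μ = m := fun i => by
    have h1 := integral_map (hXmeas i).aemeasurable (hgasm i)
    rw [hid i] at h1
    exact h1.symm
  have hYsq_eq : ∀ i, ∫ ω, (Y i ω) ^ 2 ∂μ = ∫ x, g x ^ 2 ∂Q := fun i => by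
    have hasm : AEStronglyMeasurable (fun x => g x ^ 2) (Measure.map (Xs i) μ) := by
      rw [hid i]; exact (hg_meas.pow_const 2).aestronglyMeasurable
    have h1 := integral_map (f := fun x => g x ^ 2) (hXmeas i).aemeasurable hasm
    rw [hid i] at h1
    exact h1.symm
  have hYvar : ∀ i, variance (Y i) μ ≤ C ^ 2 := fun i => by
    rw [variance_eq_sub (hYmem i)]
    have h1 : ∫ ω, ((Y i) ^ 2) ω ∂μ = ∫ x, g x ^ 2 ∂Q := by
      simp only [Pi.pow_apply]
      exact hYsq_eq i
    calc ∫ ω, ((Y i) ^ 2) ω ∂μ - (∫ ω, Y i ω ∂μ) ^ 2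
        ≤ ∫ ω, ((Y i) ^ 2) ω ∂μ := sub_le_self _ (sq_nonneg _)
      _ = ∫ x, g x ^ 2 ∂Q := h1
      _ ≤ C ^ 2 := hgsq_int
  have hpair : Set.Pairwise ↑(Finset.univ : Finset (Fin n))
      fun i j => IndepFun (Y i) (Y j) μ :=
    fun i _ j _ hij => (hindep.indepFun hij).comp hg_meas hg_meas
  have hSvar : variance (∑ i, Y i) μ ≤ (n:ℝ) * C ^ 2 := by
    rw [IndepFun.variance_sum (fun i _ => hYmem i) hpair]
    calc ∑ i, variance (Y i) μ ≤ ∑ _i : Fin n, C ^ 2 :=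
          Finset.sum_le_sum fun i _ => hYvar i
      _ = (n:ℝ) * C ^ 2 := by
          simp [Finset.sum_const, nsmul_eq_mul]
  have hSmem : MemLp (∑ i, Y i) 2 μ := memLp_finset_sum' _ fun i _ => hYmem i
  have hSmean : ∫ ω, (∑ i, Y i) ω ∂μ = (n:ℝ) * m := by
    simp only [Finset.sum_apply]
    rw [integral_finset_sum _ fun i _ => (hYmem i).integrable one_le_two]
    simp only [hYint_eq]
    simp [Finset.sum_const, nsmul_eq_mul]
  -- the event and its complement
  set t : ℝ := 2 / Real.sqrt ((n:ℝ) * δ) * A * B with ht_def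
  set E : Set Ω :=
    {ω | |(1 / (n : ℝ)) * ∑ i, h (Xs i ω) * l (Xs i ω) - ∫ x, h x ∂P| ≤ t} with hE_def
  suffices hEc : μ Eᶜ ≤ ENNReal.ofReal δ by
    have h1 : (1:ENNReal) ≤ μ E + ENNReal.ofReal δ := by
      calc (1:ENNReal) = μ (E ∪ Eᶜ) := by rw [Set.union_compl_self]; exact measure_univ.symm
        _ ≤ μ E + μ Eᶜ := measure_union_le _ _
        _ ≤ μ E + ENNReal.ofReal δ := add_le_add_right hEc _
    have h2 : ENNReal.ofReal (1 - δ) + ENNReal.ofReal δ = 1 := by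
      rw [← ENNReal.ofReal_add (by linarith) hδ0.le]
      norm_num
    exact (ENNReal.add_le_add_iff_right ENNReal.ofReal_ne_top).1 (by rw [h2]; exact h1)
  have hsum_eq : ∀ ω, (∑ i, Y i) ω = ∑ i, h (Xs i ω) * l (Xs i ω) := fun ω => by
    simp only [Finset.sum_apply]
    rfl
  rcases eq_or_lt_of_le hC0 with hCz | hCpos
  · -- degenerate case : the constant is zero and g vanishes a.e.
    have hgz : g =ᵐ[Q] 0 := by
      rcases mul_eq_zero.mp hCz.symm with hAz | hBz
      · have hiz : ∫ x, |h x| ^ p ∂Q = 0 := by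
          rw [hA_eq] at hAz
          exact (Real.rpow_eq_zero hintp0 (by positivity : (0:ℝ) < 1/p).ne').1 hAz
        have hae := (integral_eq_zero_iff_of_nonneg (fun x => by positivity) hpnorm).1 hiz
        filter_upwards [hae] with x hx
        have hx' : |h x| ^ p = 0 := hx
        have hhx : h x = 0 :=
          abs_eq_zero.1 ((Real.rpow_eq_zero (abs_nonneg _) hp0.ne').1 hx')
        simp [hg_def, hhx]
      · have hiz : ∫ x, l x ^ α ∂Q = 0 := by
          rw [hB_eq] at hBz
          exact (Real.rpow_eq_zero hintα0 (by positivity : (0:ℝ) < 1/α).ne').1 hBz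
        have hInn : Integrable (fun x => l x ^ α) Q := hI
        have hae := (integral_eq_zero_iff_of_nonneg
          (fun x => Real.rpow_nonneg (hl_nonneg x) _) hInn).1 hiz
        filter_upwards [hae] with x hx
        have hx' : l x ^ α = 0 := hx
        have hlx : l x = 0 :=
          (Real.rpow_eq_zero (hl_nonneg x) hα_pos.ne').1 hx'
        simp [hg_def, hlx]
    have hm0 : m = 0 := by rw [hm_set]; exact integral_eq_zero_of_ae hgz
    have ht0 : 0 ≤ t := by
      rw [ht_def]
      have : 0 ≤ 2 / Real.sqrt ((n:ℝ) * δ) := by positivity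
      positivity
    have hY0 : ∀ᵐ ω ∂μ, ∀ i, Y i ω = 0 := by
      rw [ae_all_iff]
      intro i
      exact ae_of_ae_map (hXmeas i).aemeasurable (by rw [hid i]; exact hgz)
    have hsub : Eᶜ ⊆ {ω | ¬ ∀ i, Y i ω = 0} := by
      intro ω hω hall
      apply hω
      show |(1 / (n : ℝ)) * ∑ i, h (Xs i ω) * l (Xs i ω) - ∫ x, h x ∂P| ≤ t
      have hs0 : ∑ i, h (Xs i ω) * l (Xs i ω) = 0 := by
        rw [← hsum_eq ω, Finset.sum_apply]
        exact Finset.sum_eq_zero fun i _ => hall i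
      rw [hs0, hm_def, hm0]
      simpa using ht0
    calc μ Eᶜ ≤ μ {ω | ¬ ∀ i, Y i ω = 0} := measure_mono hsub
      _ = 0 := ae_iff.1 hY0
      _ ≤ ENNReal.ofReal δ := zero_le
  · -- main case : Chebyshev
    have hnδ : (0:ℝ) < (n:ℝ) * δ := by positivity
    have htC : t = 2 / Real.sqrt ((n:ℝ) * δ) * C := by rw [ht_def, hC_def]; ring
    have ht_pos : 0 < t := by
      rw [htC]
      have h2 : 0 < 2 / Real.sqrt ((n:ℝ) * δ) := by positivity
      exact mul_pos h2 hCpos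
    have hnt : (0:ℝ) < (n:ℝ) * t := mul_pos hn0 ht_pos
    have hcheb := meas_ge_le_variance_div_sq (μ := μ) hSmem hnt
    have hsub : Eᶜ ⊆ {ω | (n:ℝ) * t ≤ |(∑ i, Y i) ω - ∫ x, (∑ i, Y i) x ∂μ|} := by
      intro ω hω
      have hω' : t < |(1 / (n : ℝ)) * ∑ i, h (Xs i ω) * l (Xs i ω) - ∫ x, h x ∂P| :=
        not_le.1 hω
      rw [hm_def] at hω'
      show (n:ℝ) * t ≤ |(∑ i, Y i) ω - ∫ x, (∑ i, Y i) x ∂μ|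
      rw [hSmean, hsum_eq ω]
      have inner : ∑ i, h (Xs i ω) * l (Xs i ω) - (n:ℝ) * m
          = (n:ℝ) * ((1 / (n : ℝ)) * ∑ i, h (Xs i ω) * l (Xs i ω) - m) := by
        field_simp
      rw [inner, abs_mul, abs_of_nonneg hn0.le]
      exact mul_le_mul_of_nonneg_left hω'.le hn0.le
    have hvar_bound : variance (∑ i, Y i) μ / ((n:ℝ) * t) ^ 2 ≤ δ := by
      rw [div_le_iff₀ (by positivity)]
      have ht2 : t ^ 2 = 4 * C ^ 2 / ((n:ℝ) * δ) := by
        rw [htC, mul_pow, div_pow, Real.sq_sqrt hnδ.le]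
        ring
      calc variance (∑ i, Y i) μ ≤ (n:ℝ) * C ^ 2 := hSvar
        _ ≤ δ * ((n:ℝ) * t) ^ 2 := aux_alg hn0 hδ0 ht2
    calc μ Eᶜ ≤ μ {ω | (n:ℝ) * t ≤ |(∑ i, Y i) ω - ∫ x, (∑ i, Y i) x ∂μ|} :=
          measure_mono hsub
      _ ≤ ENNReal.ofReal (variance (∑ i, Y i) μ / ((n:ℝ) * t) ^ 2) := hcheb
      _ ≤ ENNReal.ofReal δ := ENNReal.ofReal_le_ofReal hvar_bound
end

section
/- For a random variable Y = h(X̃)l(X̃) with X̃ ∼ Q, if ‖h‖_{p,Q} < ∞ for p > 2 and α ≥ 2p/(p−2), then E_Q[(h(X̃)l(X̃))²] ≤ ‖h‖²_{p,Q} · I_α(P‖Q)^{2/α}. -/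
open MeasureTheory

section Aux

variable {X : Type*} [MeasurableSpace X]

lemma memLp_of_integrable_abs_rpow {Q : Measure X} {f : X → ℝ}
    (hf : AEStronglyMeasurable f Q) {r : ℝ} (hr : 0 < r)
    (hint : Integrable (fun x => |f x| ^ r) Q) : MemLp f (ENNReal.ofReal r) Q := by
  have h0 : (ENNReal.ofReal r) ≠ 0 := (ENNReal.ofReal_pos.mpr hr).ne'
  rw [← memLp_norm_rpow_iff hf h0 ENNReal.ofReal_ne_top,
    ENNReal.div_self h0 ENNReal.ofReal_ne_top, memLp_one_iff_integrable]
  have heq : (fun x => ‖f x‖ ^ (ENNReal.ofReal r).toReal) = fun x => |f x| ^ r := by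
    funext x
    rw [ENNReal.toReal_ofReal hr.le, Real.norm_eq_abs]
  rw [heq]
  exact hint

lemma pow_two_rpow {x : ℝ} (hx : 0 ≤ x) (s : ℝ) : (x ^ 2) ^ s = x ^ (2 * s) := by
  rw [← Real.rpow_natCast x 2, ← Real.rpow_mul hx]
  norm_num

lemma memLp_sq {Q : Measure X} {f : X → ℝ} {r : ℝ} (hr : 0 < r)
    (hf : MemLp f (ENNReal.ofReal r) Q) :
    MemLp (fun x => f x ^ 2) (ENNReal.ofReal (r / 2)) Q := by
  have h := hf.norm_rpow_div (ENNReal.ofReal 2)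
  have h2 : (ENNReal.ofReal 2).toReal = 2 := by
    rw [ENNReal.toReal_ofReal]; norm_num
  have hdiv : ENNReal.ofReal r / ENNReal.ofReal 2 = ENNReal.ofReal (r / 2) := by
    rw [ENNReal.ofReal_div_of_pos]; norm_num
  rw [h2, hdiv] at h
  have heq : (fun x => ‖f x‖ ^ (2 : ℝ)) = fun x => f x ^ 2 := by
    funext x
    rw [Real.norm_eq_abs, Real.rpow_two, sq_abs]
  rwa [heq] at h

lemma lyapunov {Q : Measure X} [IsProbabilityMeasure Q] {f : X → ℝ}
    (hf : ∀ x, 0 ≤ f x) (hmeas : Measurable f)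
    {β α : ℝ} (hβ : 0 < β) (hβα : β ≤ α)
    (hint : Integrable (fun x => f x ^ α) Q) :
    ∫ x, f x ^ β ∂Q ≤ (∫ x, f x ^ α ∂Q) ^ (β / α) := by
  have hα : 0 < α := hβ.trans_le hβα
  rcases eq_or_lt_of_le hβα with heq | hlt
  · subst heq
    rw [div_self hα.ne', Real.rpow_one]
  · set r := α / β with hr
    have hr1 : 1 < r := (one_lt_div hβ).mpr hlt
    have hpq : r.HolderConjugate (Real.conjExponent r) :=
      Real.HolderConjugate.conjExponent hr1
    have hfβ_meas : AEStronglyMeasurable (fun x => f x ^ β) Q :=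
      (hmeas.pow_const β).aestronglyMeasurable
    have hintr : Integrable (fun x => |f x ^ β| ^ r) Q := by
      have : (fun x => |f x ^ β| ^ r) = fun x => f x ^ α := by
        funext x
        rw [abs_of_nonneg (Real.rpow_nonneg (hf x) β), ← Real.rpow_mul (hf x), hr,
          mul_comm, div_mul_cancel₀ _ hβ.ne']
      rw [this]; exact hint
    have hmem1 : MemLp (fun x => f x ^ β) (ENNReal.ofReal r) Q :=
      memLp_of_integrable_abs_rpow hfβ_meas (lt_trans one_pos hr1) hintr
    have hmem2 : MemLp (fun _ : X => (1 : ℝ)) (ENNReal.ofReal (Real.conjExponent r)) Q :=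
      memLp_const 1
    have H := integral_mul_le_Lp_mul_Lq_of_nonneg hpq
      (Filter.Eventually.of_forall fun x => Real.rpow_nonneg (hf x) β)
      (Filter.Eventually.of_forall fun _ => zero_le_one) hmem1 hmem2
    simp only [mul_one] at H
    have e1 : (fun x => (f x ^ β) ^ r) = fun x => f x ^ α := by
      funext x
      rw [← Real.rpow_mul (hf x), hr, mul_comm, div_mul_cancel₀ _ hβ.ne']
    have e2 : ∫ _ : X, (1 : ℝ) ^ Real.conjExponent r ∂Q = 1 := by
      simp [Real.one_rpow]
    rw [e1, e2, Real.one_rpow, mul_one, one_div, hr, inv_div] at H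
    exact H

end Aux

/-- Second-moment bound for `h(X̃)·l(X̃)`, `X̃ ∼ Q`, via Hölder's inequality:
`E_Q[(h·l)²] ≤ ‖h‖²_{p,Q} · I_α(P‖Q)^{2/α}`. -/
theorem second_moment_hl_le
    {X : Type*} [MeasurableSpace X]
    (P Q : Measure X) [IsProbabilityMeasure P] [IsProbabilityMeasure Q]
    (hPQ : P ≪ Q) (h : X → ℝ) (hmeas : Measurable h)
    (p : ℝ) (hp : 2 < p) (hpnorm : Integrable (fun x => |h x| ^ p) Q)
    (α : ℝ) (hα : 2 * p / (p - 2) ≤ α)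
    (hI : Integrable (fun x => lr P Q x ^ α) Q) :
    ∫ x, (h x * lr P Q x) ^ 2 ∂Q ≤ pNorm h p Q ^ 2 * Ialpha P Q α ^ (2 / α) := by
  set l := lr P Q with hl_def
  have hp0 : 0 < p := lt_trans two_pos hp
  have hp2 : 0 < p - 2 := sub_pos.mpr hp
  set β := 2 * p / (p - 2) with hβ_def
  have hβ0 : 0 < β := div_pos (by linarith) hp2
  have hα0 : 0 < α := hβ0.trans_le hα
  have hl_nonneg : ∀ x, 0 ≤ l x := fun x => ENNReal.toReal_nonneg
  have hl_meas : Measurable l := (Measure.measurable_rnDeriv P Q).ennreal_toReal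
  -- Integrability of l ^ β
  have hIβ : Integrable (fun x => l x ^ β) Q := by
    refine Integrable.mono (hI.add (integrable_const 1))
      (hl_meas.pow_const β).aestronglyMeasurable ?_
    refine Filter.Eventually.of_forall fun x => ?_
    simp only [Pi.add_apply, Real.norm_eq_abs]
    rw [abs_of_nonneg (Real.rpow_nonneg (hl_nonneg x) β),
      abs_of_nonneg (add_nonneg (Real.rpow_nonneg (hl_nonneg x) α) zero_le_one)]
    by_cases hx : l x ≤ 1
    · have : l x ^ β ≤ 1 := Real.rpow_le_one (hl_nonneg x) hx hβ0.le
      nlinarith [Real.rpow_nonneg (hl_nonneg x) α]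
    · push_neg at hx
      have : l x ^ β ≤ l x ^ α := Real.rpow_le_rpow_of_exponent_le hx.le hα
      linarith
  -- MemLp facts
  have hmemh : MemLp h (ENNReal.ofReal p) Q :=
    memLp_of_integrable_abs_rpow hmeas.aestronglyMeasurable hp0 hpnorm
  have hmemh2 : MemLp (fun x => h x ^ 2) (ENNReal.ofReal (p / 2)) Q :=
    memLp_sq hp0 hmemh
  have hmeml : MemLp l (ENNReal.ofReal β) Q := by
    refine memLp_of_integrable_abs_rpow hl_meas.aestronglyMeasurable hβ0 ?_
    have : (fun x => |l x| ^ β) = fun x => l x ^ β := by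
      funext x; rw [abs_of_nonneg (hl_nonneg x)]
    rw [this]; exact hIβ
  have hβ2 : β / 2 = p / (p - 2) := by
    rw [hβ_def]; ring
  have hmeml2 : MemLp (fun x => l x ^ 2) (ENNReal.ofReal (p / (p - 2))) Q := by
    have := memLp_sq hβ0 hmeml
    rwa [hβ2] at this
  -- Hölder with exponents p/2 and p/(p-2)
  have hpq : (p / 2).HolderConjugate (p / (p - 2)) := by
    refine ⟨?_, div_pos hp0 two_pos, div_pos hp0 hp2⟩
    rw [inv_div, inv_div, inv_one, ← add_div, div_eq_one_iff_eq hp0.ne']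
    ring
  have H := integral_mul_le_Lp_mul_Lq_of_nonneg hpq
    (Filter.Eventually.of_forall fun x => sq_nonneg (h x))
    (Filter.Eventually.of_forall fun x => sq_nonneg (l x)) hmemh2 hmeml2
  -- rewrite the three integrals in H
  have e0 : ∫ x, (h x * l x) ^ 2 ∂Q = ∫ x, h x ^ 2 * l x ^ 2 ∂Q := by
    congr 1; funext x; ring
  have e1 : (fun x => (h x ^ 2) ^ (p / 2)) = fun x => |h x| ^ p := by
    funext x
    rw [← sq_abs, pow_two_rpow (abs_nonneg (h x))]
    congr 1; field_simp
  have e2 : (fun x => (l x ^ 2) ^ (p / (p - 2))) = fun x => l x ^ β := by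
    funext x
    rw [pow_two_rpow (hl_nonneg x)]
    congr 1
    rw [hβ_def]; ring
  rw [e1, e2] at H
  rw [e0]
  refine H.trans ?_
  have hA : (0:ℝ) ≤ ∫ x, |h x| ^ p ∂Q :=
    integral_nonneg fun x => Real.rpow_nonneg (abs_nonneg _) _
  have hIα : (0:ℝ) ≤ ∫ x, l x ^ α ∂Q :=
    integral_nonneg fun x => Real.rpow_nonneg (hl_nonneg _) _
  have hlyap : ∫ x, l x ^ β ∂Q ≤ (∫ x, l x ^ α ∂Q) ^ (β / α) :=
    lyapunov hl_nonneg hl_meas hβ0 hα hI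
  have hstep : (∫ x, l x ^ β ∂Q) ^ (1 / (p / (p - 2))) ≤
      (∫ x, l x ^ α ∂Q) ^ (2 / α) := by
    have hexp : (0:ℝ) ≤ 1 / (p / (p - 2)) := by positivity
    calc (∫ x, l x ^ β ∂Q) ^ (1 / (p / (p - 2)))
        ≤ ((∫ x, l x ^ α ∂Q) ^ (β / α)) ^ (1 / (p / (p - 2))) := by
          refine Real.rpow_le_rpow ?_ hlyap hexp
          exact integral_nonneg fun x => Real.rpow_nonneg (hl_nonneg _) _
      _ = (∫ x, l x ^ α ∂Q) ^ (2 / α) := by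
          rw [← Real.rpow_mul hIα]
          congr 1
          rw [hβ_def, one_div, inv_div]
          field_simp
  have hpnorm2 : pNorm h p Q ^ 2 = (∫ x, |h x| ^ p ∂Q) ^ (1 / (p / 2)) := by
    rw [pNorm, ← Real.rpow_natCast ((∫ x, |h x| ^ p ∂Q) ^ (1 / p)) 2,
      ← Real.rpow_mul hA]
    congr 1
    rw [one_div_div]
    push_cast
    ring
  rw [hpnorm2, Ialpha]
  have hApow : (0:ℝ) ≤ (∫ x, |h x| ^ p ∂Q) ^ (1 / (p / 2)) := Real.rpow_nonneg hA _
  exact mul_le_mul_of_nonneg_left hstep hApow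
end

section
/- Let τ_n > 0 and define the truncated likelihood ratio l'_n(x) = min(l(x), τ_n). If ‖h‖_{∞,Q} < ∞ and I_α(P‖Q) < ∞ for some α ∈ (1,2], then the bias of the truncated estimator satisfies |E_Q[h·l'_n] − E_P[h]| ≤ ‖h‖_{∞,Q} · τ_n^{1−α} · I_α(P‖Q). -/
open MeasureTheory

/-- Bias bound for the truncated likelihood-ratio estimator under the `∞`-norm:
`|E_Q[h·min(l,τ)] − E_P[h]| ≤ ‖h‖_{∞,Q} · τ^{1−α} · I_α(P‖Q)`. -/
theorem truncated_lr_bias_bound_inftyNorm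
    {X : Type*} [MeasurableSpace X]
    (P Q : Measure X) [IsProbabilityMeasure P] [IsProbabilityMeasure Q]
    (hPQ : P ≪ Q) (h : X → ℝ) (hmeas : Measurable h)
    (hinf : eLpNorm h ⊤ Q < ⊤)
    (α : ℝ) (hα1 : 1 < α) (hα2 : α ≤ 2)
    (hI : Integrable (fun x => lr P Q x ^ α) Q)
    (τ : ℝ) (hτ : 0 < τ) :
    |(∫ x, h x * min (lr P Q x) τ ∂Q) - ∫ x, h x ∂P| ≤
      (eLpNorm h ⊤ Q).toReal * τ ^ (1 - α) * Ialpha P Q α := by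
  set M := (eLpNorm h ⊤ Q).toReal with hM
  set l := lr P Q with hl
  have hlmeas : Measurable l := (Measure.measurable_rnDeriv P Q).ennreal_toReal
  have hl0 : ∀ x, 0 ≤ l x := fun x => ENNReal.toReal_nonneg
  have hM0 : 0 ≤ M := ENNReal.toReal_nonneg
  -- a.e. bound on |h|
  have hhM : ∀ᵐ x ∂Q, |h x| ≤ M := by
    filter_upwards [ae_le_eLpNormEssSup (f := h) (μ := Q)] with x hx
    have : (‖h x‖₊ : ENNReal) ≤ eLpNorm h ⊤ Q := by rw [eLpNorm_exponent_top]; exact hx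
    have := ENNReal.toReal_mono hinf.ne this
    simpa [hM, Real.norm_eq_abs] using this
  -- pointwise key bound : l x - min (l x) τ ≤ τ ^ (1-α) * l x ^ α
  have key : ∀ x, l x - min (l x) τ ≤ τ ^ (1 - α) * l x ^ α := by
    intro x
    rcases le_or_gt (l x) τ with hle | hlt
    · rw [min_eq_left hle]
      simp only [sub_self]
      exact mul_nonneg (Real.rpow_nonneg hτ.le _) (Real.rpow_nonneg (hl0 x) _)
    · rw [min_eq_right hlt.le]
      have hτα : τ ^ (1 - α) * τ ^ (α - 1) = 1 := by
        rw [← Real.rpow_add hτ]; simp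
      have h1 : τ ^ (α - 1) ≤ l x ^ (α - 1) :=
        Real.rpow_le_rpow hτ.le hlt.le (by linarith)
      have h2 : l x - τ ≤ l x := by linarith
      calc l x - τ ≤ l x := h2
        _ = τ ^ (1 - α) * τ ^ (α - 1) * l x := by rw [hτα, one_mul]
        _ ≤ τ ^ (1 - α) * l x ^ (α - 1) * l x := by
            have hτ1 : (0:ℝ) ≤ τ ^ (1 - α) := Real.rpow_nonneg hτ.le _
            have := mul_le_mul_of_nonneg_left h1 hτ1
            exact mul_le_mul_of_nonneg_right this (hl0 x)
        _ = τ ^ (1 - α) * l x ^ α := by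
            have hx0 : (0:ℝ) < l x := hτ.trans hlt
            rw [mul_assoc, ← Real.rpow_add_one hx0.ne', sub_add_cancel]
  -- integrabilities
  have hl_int : Integrable l Q := Measure.integrable_toReal_rnDeriv
  have h_hl_int : Integrable (fun x => h x * l x) Q := by
    refine Integrable.mono' (hl_int.const_mul M) ((hmeas.mul hlmeas).aestronglyMeasurable) ?_
    filter_upwards [hhM] with x hx
    rw [Real.norm_eq_abs, abs_mul, abs_of_nonneg (hl0 x)]
    exact mul_le_mul_of_nonneg_right hx (hl0 x)
  have h_hmin_int : Integrable (fun x => h x * min (l x) τ) Q := by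
    refine Integrable.mono' (hl_int.const_mul M)
      ((hmeas.mul (hlmeas.min measurable_const)).aestronglyMeasurable) ?_
    filter_upwards [hhM] with x hx
    rw [Real.norm_eq_abs, abs_mul]
    have hmin0 : 0 ≤ min (l x) τ := le_min (hl0 x) hτ.le
    rw [abs_of_nonneg hmin0]
    exact mul_le_mul hx (min_le_left _ _) hmin0 hM0
  -- E_P[h] = ∫ h * l dQ
  have hEP : ∫ x, h x ∂P = ∫ x, h x * l x ∂Q := by
    rw [← integral_rnDeriv_smul hPQ]
    simp only [smul_eq_mul, hl, lr, mul_comm]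
  rw [hEP, ← integral_sub h_hmin_int h_hl_int]
  have habs : |∫ x, h x * min (l x) τ - h x * l x ∂Q| ≤
      ∫ x, |h x * min (l x) τ - h x * l x| ∂Q := by
    simpa [Real.norm_eq_abs] using
      norm_integral_le_integral_norm (μ := Q) (fun x => h x * min (l x) τ - h x * l x)
  refine habs.trans ?_
  have hbound : ∫ x, |h x * min (l x) τ - h x * l x| ∂Q ≤
      ∫ x, M * (τ ^ (1 - α) * l x ^ α) ∂Q := by
    refine integral_mono_of_nonneg (Filter.Eventually.of_forall fun x => abs_nonneg _)
      ((hI.const_mul _).const_mul M) ?_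
    filter_upwards [hhM] with x hx
    have : |h x * min (l x) τ - h x * l x| = |h x| * (l x - min (l x) τ) := by
      rw [← mul_sub, abs_mul, abs_of_nonpos (sub_nonpos.mpr (min_le_left _ _)), neg_sub]
    rw [this]
    exact mul_le_mul hx (key x) (sub_nonneg.mpr (min_le_left _ _)) hM0
  refine hbound.trans_eq ?_
  rw [Ialpha]
  rw [← integral_const_mul]
  congr 1; ext x; ring
end

section
/- Let τ_n > 0 and l'_n(x) = min(l(x), τ_n). If ‖h‖_{∞,Q} < ∞ and I_α(P‖Q) < ∞ for some α ∈ (1,2], then for i.i.d. X̃_1,…,X̃_n ∼ Q the variance of the truncated estimator h̄_n^{Tru} = (1/n)∑ h(X̃_i) l'_n(X̃_i) satisfies Var(h̄_n^{Tru}) ≤ (1/n) ‖h‖²_{∞,Q} · τ_n^{2−α} · I_α(P‖Q). -/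
open MeasureTheory ProbabilityTheory

/-- Variance bound for the truncated likelihood-ratio estimator under the `∞`-norm:
`Var(h̄ₙ^{Tru}) ≤ (1/n)‖h‖²_{∞,Q} τ^{2−α} I_α(P‖Q)`. -/
theorem truncated_lr_variance_bound_inftyNorm
    {X : Type*} [MeasurableSpace X] {Ω : Type*} [MeasurableSpace Ω]
    (P Q : Measure X) [IsProbabilityMeasure P] [IsProbabilityMeasure Q]
    (hPQ : P ≪ Q) (h : X → ℝ) (hmeas : Measurable h)
    (hinf : eLpNorm h ⊤ Q < ⊤)
    (α : ℝ) (hα1 : 1 < α) (hα2 : α ≤ 2)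
    (hI : Integrable (fun x => lr P Q x ^ α) Q)
    (τ : ℝ) (hτ : 0 < τ)
    (μ : Measure Ω) [IsProbabilityMeasure μ]
    (n : ℕ) (hn : 0 < n) (Xs : Fin n → Ω → X)
    (hXmeas : ∀ i, Measurable (Xs i))
    (hid : ∀ i, Measure.map (Xs i) μ = Q)
    (hindep : iIndepFun Xs μ) :
    variance (fun ω => (1 / (n : ℝ)) * ∑ i, h (Xs i ω) * min (lr P Q (Xs i ω)) τ) μ ≤
      (1 / (n : ℝ)) * (eLpNorm h ⊤ Q).toReal ^ 2 * τ ^ (2 - α) * Ialpha P Q α := by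
  classical
  set M : ℝ := (eLpNorm h ⊤ Q).toReal with hM
  set g : X → ℝ := fun x => h x * min (lr P Q x) τ with hg
  have hgmeas : Measurable g := by
    apply hmeas.mul
    exact (Measurable.ennreal_toReal (Measure.measurable_rnDeriv P Q)).min measurable_const
  have hMnonneg : 0 ≤ M := ENNReal.toReal_nonneg
  -- a.e. bound on h
  have hhb : ∀ᵐ x ∂Q, ‖h x‖ ≤ M := by
    have := ae_le_eLpNormEssSup (f := h) (μ := Q)
    filter_upwards [this] with x hx
    rw [eLpNorm_exponent_top] at hinf
    have h2 := ENNReal.toReal_mono hinf.ne hx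
    rw [hM, eLpNorm_exponent_top]
    simpa using h2
  -- pointwise bound on g with the good a.e. bound
  have hlrnn : ∀ x, 0 ≤ lr P Q x := fun x => ENNReal.toReal_nonneg
  have hmin_bound : ∀ x, (min (lr P Q x) τ) ^ 2 ≤ τ ^ (2 - α) * lr P Q x ^ α := by
    intro x
    set l := lr P Q x with hl
    have hl0 : 0 ≤ l := hlrnn x
    rcases eq_or_lt_of_le hl0 with h0 | hpos
    · rw [← h0, min_eq_left hτ.le, Real.zero_rpow (by positivity : α ≠ 0)]
      simp
    · set m := min l τ with hm'
      have hmpos : 0 < m := lt_min hpos hτ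
      have h1 : m ^ 2 = m ^ ((2 : ℝ) - α) * m ^ α := by
        rw [← Real.rpow_add hmpos, sub_add_cancel, ← Real.rpow_natCast m 2]
        norm_num
      rw [h1]
      apply mul_le_mul
      · exact Real.rpow_le_rpow hmpos.le (min_le_right _ _) (by linarith)
      · exact Real.rpow_le_rpow hmpos.le (min_le_left _ _) (by positivity)
      · positivity
      · positivity
  have hgb : ∀ᵐ x ∂Q, g x ^ 2 ≤ M ^ 2 * (τ ^ (2 - α) * lr P Q x ^ α) := by
    filter_upwards [hhb] with x hx
    have : g x ^ 2 = h x ^ 2 * (min (lr P Q x) τ) ^ 2 := by ring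
    rw [this]
    apply mul_le_mul _ (hmin_bound x) (by positivity) (by positivity)
    calc h x ^ 2 = ‖h x‖ ^ 2 := by rw [Real.norm_eq_abs, sq_abs]
    _ ≤ M ^ 2 := by apply pow_le_pow_left₀ (norm_nonneg _) hx
  -- |g| ≤ M * τ a.e.
  have hgabs : ∀ᵐ x ∂Q, ‖g x‖ ≤ M * τ := by
    filter_upwards [hhb] with x hx
    rw [hg]
    simp only [norm_mul]
    apply mul_le_mul hx _ (norm_nonneg _) hMnonneg
    rw [Real.norm_eq_abs, abs_of_nonneg (le_min (hlrnn x) hτ.le)]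
    exact min_le_right _ _
  -- integrability of g²
  have hgsq_int : Integrable (fun x => g x ^ 2) Q := by
    apply Integrable.mono' (integrable_const ((M * τ) ^ 2))
      ((hgmeas.pow_const 2).aestronglyMeasurable)
    filter_upwards [hgabs] with x hx
    rw [Real.norm_eq_abs, abs_of_nonneg (sq_nonneg _)]
    calc g x ^ 2 = ‖g x‖ ^ 2 := by rw [Real.norm_eq_abs, sq_abs]
    _ ≤ (M * τ) ^ 2 := pow_le_pow_left₀ (norm_nonneg _) hx 2
  -- the key second-moment bound
  have hkey : ∫ x, g x ^ 2 ∂Q ≤ M ^ 2 * τ ^ (2 - α) * Ialpha P Q α := by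
    have := integral_mono_ae hgsq_int ((hI.const_mul (M ^ 2 * τ ^ (2 - α)))) ?_
    · rw [integral_const_mul] at this
      calc ∫ x, g x ^ 2 ∂Q ≤ (M ^ 2 * τ ^ (2 - α)) * ∫ x, lr P Q x ^ α ∂Q := this
      _ = M ^ 2 * τ ^ (2 - α) * Ialpha P Q α := by rw [Ialpha]
    · filter_upwards [hgb] with x hx
      calc g x ^ 2 ≤ M ^ 2 * (τ ^ (2 - α) * lr P Q x ^ α) := hx
      _ = M ^ 2 * τ ^ (2 - α) * lr P Q x ^ α := by ring
  -- per-coordinate facts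
  have hcomp_meas : ∀ i, Measurable (fun ω => g (Xs i ω)) := fun i => hgmeas.comp (hXmeas i)
  have hae : ∀ i : Fin n, ∀ᵐ ω ∂μ, ‖g (Xs i ω)‖ ≤ M * τ := by
    intro i
    have : ∀ᵐ x ∂(Measure.map (Xs i) μ), ‖g x‖ ≤ M * τ := by rw [hid i]; exact hgabs
    exact ae_of_ae_map (hXmeas i).aemeasurable this
  have hmem2 : ∀ i : Fin n, MemLp (fun ω => g (Xs i ω)) 2 μ := by
    intro i
    exact (memLp_top_of_bound (hcomp_meas i).aestronglyMeasurable _ (hae i)).mono_exponent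
      le_top
  have hvar_i : ∀ i : Fin n, variance (fun ω => g (Xs i ω)) μ ≤ ∫ x, g x ^ 2 ∂Q := by
    intro i
    refine le_trans (variance_le_expectation_sq (hcomp_meas i).aestronglyMeasurable) ?_
    have heq : (μ[(fun ω => g (Xs i ω)) ^ 2]) = ∫ x, g x ^ 2 ∂(Measure.map (Xs i) μ) := by
      rw [integral_map (hXmeas i).aemeasurable ((hgmeas.pow_const 2).aestronglyMeasurable)]
      simp
    rw [heq, hid i]
  -- independence of the composed family (pairwise)
  have hpair : Set.Pairwise ↑(Finset.univ : Finset (Fin n))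
      (fun i j => IndepFun (fun ω => g (Xs i ω)) (fun ω => g (Xs j ω)) μ) := by
    intro i _ j _ hij
    exact (hindep.indepFun hij).comp hgmeas hgmeas
  -- put everything together
  have hsum_eq : (fun ω => ∑ i, h (Xs i ω) * min (lr P Q (Xs i ω)) τ)
      = ∑ i : Fin n, (fun ω => g (Xs i ω)) := by
    ext ω; simp [hg]
  rw [variance_const_mul, hsum_eq,
    IndepFun.variance_sum (fun i _ => hmem2 i) hpair]
  have hsumle : ∑ i : Fin n, variance (fun ω => g (Xs i ω)) μ ≤ n * ∫ x, g x ^ 2 ∂Q := by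
    calc ∑ i : Fin n, variance (fun ω => g (Xs i ω)) μ ≤ ∑ _i : Fin n, ∫ x, g x ^ 2 ∂Q :=
      Finset.sum_le_sum (fun i _ => hvar_i i)
    _ = n * ∫ x, g x ^ 2 ∂Q := by rw [Finset.sum_const, Finset.card_univ, Fintype.card_fin,
      nsmul_eq_mul]
  have hnpos : (0 : ℝ) < n := Nat.cast_pos.mpr hn
  calc (1 / (n : ℝ)) ^ 2 * ∑ i : Fin n, variance (fun ω => g (Xs i ω)) μ
      ≤ (1 / (n : ℝ)) ^ 2 * (n * ∫ x, g x ^ 2 ∂Q) := by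
        apply mul_le_mul_of_nonneg_left hsumle (by positivity)
    _ = (1 / (n : ℝ)) * ∫ x, g x ^ 2 ∂Q := by field_simp
    _ ≤ (1 / (n : ℝ)) * (M ^ 2 * τ ^ (2 - α) * Ialpha P Q α) := by
        apply mul_le_mul_of_nonneg_left hkey (by positivity)
    _ = (1 / (n : ℝ)) * M ^ 2 * τ ^ (2 - α) * Ialpha P Q α := by ring
end

section
/- Under ‖h‖_{∞,Q} < ∞ and I_α(P‖Q) < ∞ for some α ∈ (1,2], the truncated likelihood ratio estimator with boundary τ_n satisfies, for all δ ∈ (0,1): with probability at least 1−δ, |h̄_n^{Tru} − E_P[h]| ≤ ‖h‖_{∞,Q} [ √(2 τ_n^{2−α} ln(2/δ) I_α(P‖Q) / n) + τ_n ln(2/δ)/(3n) + τ_n^{1−α} I_α(P‖Q) ]. -/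
open MeasureTheory ProbabilityTheory
open scoped ENNReal NNReal

private lemma nonneg_of_deriv {f f' : ℝ → ℝ} (hf : ∀ x, HasDerivAt f (f' x) x)
    (h0 : f 0 = 0) (hf' : ∀ x, 0 ≤ x → 0 ≤ f' x) : ∀ x, 0 ≤ x → 0 ≤ f x := by
  intro x hx
  have hmono : MonotoneOn f (Set.Ici 0) := by
    refine monotoneOn_of_deriv_nonneg (convex_Ici 0) ?_ ?_ ?_
    · exact fun y _ => (hf y).continuousAt.continuousWithinAt
    · exact fun y _ => (hf y).differentiableAt.differentiableWithinAt
    · intro y hy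
      rw [interior_Ici] at hy
      rw [(hf y).deriv]
      exact hf' y (le_of_lt hy)
  have := hmono Set.self_mem_Ici (Set.mem_Ici.mpr hx) hx
  rwa [h0] at this

private lemma lemA : ∀ u : ℝ, 0 ≤ u → 1 + u + u ^ 2 / 2 ≤ Real.exp u := by
  have key := nonneg_of_deriv (f := fun u => Real.exp u - 1 - u - u ^ 2 / 2)
    (f' := fun u => Real.exp u - 1 - u) ?_ (by simp) ?_
  · intro u hu; have := key u hu; linarith
  · intro x
    have h2 : HasDerivAt (fun u : ℝ => u ^ 2 / 2) x x := by
      simpa using ((hasDerivAt_pow 2 x).div_const 2)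
    exact (((Real.hasDerivAt_exp x).sub_const 1).sub (hasDerivAt_id x)).sub h2
  · intro x _
    have := Real.add_one_le_exp x; linarith

private lemma lemB : ∀ w : ℝ, w ≤ 0 → Real.exp w ≤ 1 + w + w ^ 2 / 2 := by
  have key := nonneg_of_deriv (f := fun t => 1 - t + t ^ 2 / 2 - Real.exp (-t))
    (f' := fun t => -1 + t + Real.exp (-t)) ?_ (by simp) ?_
  · intro w hw
    have := key (-w) (by linarith)
    simp only [neg_neg] at this
    nlinarith [this]
  · intro x
    have h1 : HasDerivAt (fun t : ℝ => Real.exp (-t)) (-Real.exp (-x)) x := by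
      have := (hasDerivAt_neg x).exp; rw [mul_neg_one] at this; exact this
    have h2 : HasDerivAt (fun t : ℝ => t ^ 2 / 2) x x := by
      simpa using ((hasDerivAt_pow 2 x).div_const 2)
    have h3 := (((hasDerivAt_id x).const_sub 1).add h2).sub h1
    exact h3.congr_deriv (by ring)
  · intro x hx
    have := Real.add_one_le_exp (-x); linarith

private lemma lemP : ∀ x : ℝ, 0 ≤ x → 0 ≤ (x - 2) * Real.exp x + x + 2 := by
  have hp' := nonneg_of_deriv (f := fun x => (x - 1) * Real.exp x + 1)
    (f' := fun x => x * Real.exp x) ?_ (by simp) ?_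
  · refine nonneg_of_deriv (f := fun x => (x - 2) * Real.exp x + x + 2)
      (f' := fun x => (x - 1) * Real.exp x + 1) ?_ (by simp) hp'
    intro x
    have h1 : HasDerivAt (fun x : ℝ => (x - 2) * Real.exp x)
        (1 * Real.exp x + (x - 2) * Real.exp x) x :=
      ((hasDerivAt_id x).sub_const 2).mul (Real.hasDerivAt_exp x)
    exact ((h1.add (hasDerivAt_id x)).add_const 2).congr_deriv (by ring)
  · intro x
    have h1 : HasDerivAt (fun x : ℝ => (x - 1) * Real.exp x)
        (1 * Real.exp x + (x - 1) * Real.exp x) x :=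
      ((hasDerivAt_id x).sub_const 1).mul (Real.hasDerivAt_exp x)
    exact (h1.add_const 1).congr_deriv (by ring)
  · intro x hx
    positivity

private lemma lemC : ∀ w u : ℝ, 0 ≤ w → w ≤ u →
    (Real.exp w - 1 - w) * u ^ 2 ≤ (Real.exp u - 1 - u) * w ^ 2 := by
  intro w u hw hwu
  rcases eq_or_lt_of_le hw with hw0 | hw0
  · rw [← hw0]; simp
  have hu0 : 0 < u := lt_of_lt_of_le hw0 hwu
  have hasDerivAt_g : ∀ x : ℝ, 0 < x → HasDerivAt (fun x : ℝ => (Real.exp x - 1 - x) / x ^ 2)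
      (((Real.exp x - 1) * x ^ 2 - (Real.exp x - 1 - x) * (2 * x)) / (x ^ 2) ^ 2) x := by
    intro x hx
    have h1 : HasDerivAt (fun x : ℝ => Real.exp x - 1 - x) (Real.exp x - 1) x := by
      exact ((Real.hasDerivAt_exp x).sub_const 1).sub (hasDerivAt_id x)
    have h2 : HasDerivAt (fun x : ℝ => x ^ 2) (2 * x) x := by
      simpa [mul_comm] using hasDerivAt_pow 2 x
    exact h1.div h2 (by positivity)
  have hg : MonotoneOn (fun x : ℝ => (Real.exp x - 1 - x) / x ^ 2) (Set.Ioi 0) := by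
    refine monotoneOn_of_deriv_nonneg (convex_Ioi 0) ?_ ?_ ?_
    · intro x hx
      exact (hasDerivAt_g x hx).continuousAt.continuousWithinAt
    · intro x hx
      rw [interior_Ioi] at hx
      exact (hasDerivAt_g x hx).differentiableAt.differentiableWithinAt
    · intro x hx
      rw [interior_Ioi] at hx
      rw [(hasDerivAt_g x hx).deriv]
      have hnum : (Real.exp x - 1) * x ^ 2 - (Real.exp x - 1 - x) * (2 * x)
          = x * ((x - 2) * Real.exp x + x + 2) := by ring
      rw [hnum]
      exact div_nonneg (mul_nonneg hx.le (lemP x hx.le)) (by positivity)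
  have := hg (Set.mem_Ioi.mpr hw0) (Set.mem_Ioi.mpr hu0) hwu
  rw [div_le_div_iff₀ (by positivity) (by positivity)] at this
  exact this

private lemma lemD : ∀ u : ℝ, 0 ≤ u → (Real.exp u - 1 - u) * (3 - u) ≤ 3 / 2 * u ^ 2 := by
  have hf'' : ∀ x : ℝ, 0 ≤ x → 0 ≤ 1 - Real.exp x + x * Real.exp x := by
    intro x _
    have hm : Real.exp (-x) * Real.exp x = 1 := by rw [← Real.exp_add]; simp
    have h1x : 1 - x ≤ Real.exp (-x) := by linarith [Real.add_one_le_exp (-x)]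
    nlinarith [mul_le_mul_of_nonneg_right h1x (Real.exp_pos x).le]
  have hf' := nonneg_of_deriv
    (f := fun x => 3 * x - (Real.exp x - 1) * (3 - x) + (Real.exp x - 1 - x))
    (f' := fun x => 1 - Real.exp x + x * Real.exp x) ?_ (by simp) hf''
  · have hf := nonneg_of_deriv
      (f := fun x => 3 / 2 * x ^ 2 - (Real.exp x - 1 - x) * (3 - x))
      (f' := fun x => 3 * x - (Real.exp x - 1) * (3 - x) + (Real.exp x - 1 - x)) ?_ (by simp) hf'
    · intro u hu; have := hf u hu; linarith
    · intro x
      have h1 : HasDerivAt (fun x : ℝ => Real.exp x - 1 - x) (Real.exp x - 1) x := by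
        exact ((Real.hasDerivAt_exp x).sub_const 1).sub (hasDerivAt_id x)
      have h2 : HasDerivAt (fun x : ℝ => 3 - x) (-1) x := by
        simpa using (hasDerivAt_id x).const_sub 3
      have h3 : HasDerivAt (fun x : ℝ => 3 / 2 * x ^ 2) (3 / 2 * (2 * x)) x := by
        simpa [mul_comm] using (hasDerivAt_pow 2 x).const_mul (3 / 2 : ℝ)
      exact (h3.sub (h1.mul h2)).congr_deriv (by ring)
  · intro x
    have h1 : HasDerivAt (fun x : ℝ => Real.exp x - 1) (Real.exp x) x := by
      simpa using (Real.hasDerivAt_exp x).sub_const 1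
    have h2 : HasDerivAt (fun x : ℝ => 3 - x) (-1) x := by
      simpa using (hasDerivAt_id x).const_sub 3
    have h4 : HasDerivAt (fun x : ℝ => Real.exp x - 1 - x) (Real.exp x - 1) x := by
      exact ((Real.hasDerivAt_exp x).sub_const 1).sub (hasDerivAt_id x)
    have h5 : HasDerivAt (fun x : ℝ => (3 : ℝ) * x) 3 x := by
      simpa using (hasDerivAt_id x).const_mul (3 : ℝ)
    exact ((h5.sub (h1.mul h2)).add h4).congr_deriv (by ring)

private lemma mgf_ptwise {b lam z : ℝ} (hb : 0 < b) (hlam : 0 ≤ lam) (hz : |z| ≤ b) :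
    Real.exp (lam * z) ≤ 1 + lam * z + z ^ 2 / b ^ 2 * (Real.exp (lam * b) - 1 - lam * b) := by
  rcases eq_or_lt_of_le hlam with hlam0 | hlam0
  · rw [← hlam0]; simp
  have hu0 : 0 < lam * b := by positivity
  have hzb : z ^ 2 / b ^ 2 = (lam * z) ^ 2 / (lam * b) ^ 2 := by
    rw [mul_pow, mul_pow, mul_div_mul_left _ _ (by positivity : (lam:ℝ) ^ 2 ≠ 0)]
  rw [hzb]
  set u := lam * b with hu
  set w := lam * z with hw
  have hwu : |w| ≤ u := by
    rw [hw, abs_mul, abs_of_nonneg hlam]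
    calc lam * |z| ≤ lam * b := by exact mul_le_mul_of_nonneg_left hz hlam
    _ = u := hu.symm
  have hsuff : Real.exp w - 1 - w ≤ w ^ 2 / u ^ 2 * (Real.exp u - 1 - u) := by
    rw [div_mul_eq_mul_div, le_div_iff₀ (by positivity : (0:ℝ) < u ^ 2)]
    rcases le_or_gt 0 w with hw0 | hw0
    · have := lemC w u hw0 (le_trans (le_abs_self w) hwu)
      linarith
    · have h1 := lemB w hw0.le
      have h2 := lemA u hu0.le
      nlinarith [sq_nonneg w, sq_nonneg u,
        mul_le_mul_of_nonneg_right (show Real.exp w - 1 - w ≤ w ^ 2 / 2 by linarith)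
          (sq_nonneg u),
        mul_le_mul_of_nonneg_left (show u ^ 2 / 2 ≤ Real.exp u - 1 - u by linarith)
          (sq_nonneg w)]
  linarith

private lemma bernstein_one_sided' {X : Type*} [MeasurableSpace X] {Ω : Type*} [MeasurableSpace Ω]
    (Q : Measure X) [IsProbabilityMeasure Q] (μ : Measure Ω) [IsProbabilityMeasure μ]
    (n : ℕ) (hn : 0 < n) (Xs : Fin n → Ω → X)
    (hXmeas : ∀ i, Measurable (Xs i))
    (hid : ∀ i, Measure.map (Xs i) μ = Q)
    (hindep : iIndepFun Xs μ)
    (Z : X → ℝ) (hZmeas : Measurable Z)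
    (b : ℝ) (hb : 0 < b) (hbd : ∀ᵐ x ∂Q, |Z x| ≤ b)
    (v : ℝ) (hv : 0 < v) (hvar : ∫ x, (Z x) ^ 2 ∂Q ≤ v)
    (L : ℝ) (hL : 0 < L) :
    μ {ω | Real.sqrt (2 * ((n : ℝ) * v) * L) + b * L / 3
        ≤ ∑ i, (Z (Xs i ω) - ∫ x, Z x ∂Q)} ≤ ENNReal.ofReal (Real.exp (-L)) := by
  set m := ∫ x, Z x ∂Q with hm
  set N := (n : ℝ) * v with hN
  have hN0 : 0 < N := by
    rw [hN]; positivity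
  set s := Real.sqrt (2 * N * L) with hs
  have hs0 : 0 ≤ s := Real.sqrt_nonneg _
  have hs2 : s ^ 2 = 2 * N * L := Real.sq_sqrt (by positivity)
  set D := N + b * s / 3 with hD
  have hD0 : 0 < D := by rw [hD]; positivity
  set lam := s / D with hlam
  have hlam0 : 0 ≤ lam := by rw [hlam]; positivity
  set u := lam * b with hu
  have hu0 : 0 ≤ u := by rw [hu]; positivity
  set phi := Real.exp u - 1 - u with hphi
  have hphi0 : 0 ≤ phi := by
    rw [hphi]; nlinarith [Real.add_one_le_exp u]
  set c := phi / b ^ 2 with hc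
  have hc0 : 0 ≤ c := by rw [hc]; positivity
  set x₀ := s + b * L / 3 with hx0
  -- integrability over Q
  have hZint : Integrable Z Q := by
    refine Integrable.mono' (integrable_const b) hZmeas.aestronglyMeasurable ?_
    simpa using hbd
  have hmb : |m| ≤ b := by
    rw [hm]
    refine (norm_integral_le_integral_norm Z).trans ?_
    calc ∫ x, ‖Z x‖ ∂Q ≤ ∫ x, b ∂Q := by
          refine integral_mono_ae hZint.norm (integrable_const b) ?_
          filter_upwards [hbd] with x hx
          simpa [Real.norm_eq_abs] using hx
    _ = b := by simp
  have hZ2int : Integrable (fun x => (Z x) ^ 2) Q := by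
    refine Integrable.mono' (integrable_const (b ^ 2))
      (hZmeas.pow_const 2).aestronglyMeasurable ?_
    filter_upwards [hbd] with x hx
    rw [Real.norm_eq_abs, abs_of_nonneg (sq_nonneg _), ← sq_abs]
    exact pow_le_pow_left₀ (abs_nonneg _) hx 2
  -- per-variable mgf bound
  have hmgf : ∀ i : Fin n, mgf (fun ω => Z (Xs i ω) - m) μ lam ≤ Real.exp (v * c) := by
    intro i
    have hmap : mgf (fun ω => Z (Xs i ω) - m) μ lam
        = ∫ x, Real.exp (lam * (Z x - m)) ∂Q := by
      rw [mgf, ← hid i, integral_map (hXmeas i).aemeasurable (f := fun x => Real.exp (lam * (Z x - m)))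
        (((hZmeas.sub measurable_const).const_mul lam).exp.aestronglyMeasurable)]
    rw [hmap]
    have hint_exp : Integrable (fun x => Real.exp (lam * Z x)) Q := by
      refine Integrable.mono' (integrable_const (Real.exp (lam * b)))
        ((hZmeas.const_mul lam).exp.aestronglyMeasurable) ?_
      filter_upwards [hbd] with x hx
      rw [Real.norm_eq_abs, abs_of_pos (Real.exp_pos _), Real.exp_le_exp]
      exact mul_le_mul_of_nonneg_left (le_trans (le_abs_self _) hx) hlam0
    have h1 : ∫ x, Real.exp (lam * Z x) ∂Q ≤ 1 + lam * m + v * c := by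
      have hg2 : Integrable (fun x => lam * Z x + (Z x) ^ 2 * c) Q := by
        exact (hZint.const_mul lam).add (hZ2int.mul_const c)
      have hintRHS : Integrable (fun x => 1 + (lam * Z x + (Z x) ^ 2 * c)) Q := by
        exact (integrable_const 1).add hg2
      calc ∫ x, Real.exp (lam * Z x) ∂Q
          ≤ ∫ x, (1 + (lam * Z x + (Z x) ^ 2 * c)) ∂Q := by
            refine integral_mono_ae hint_exp hintRHS ?_
            filter_upwards [hbd] with x hx
            have h5 := mgf_ptwise hb hlam0 hx
            have heq : (Z x) ^ 2 / b ^ 2 * (Real.exp (lam * b) - 1 - lam * b)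
                = (Z x) ^ 2 * c := by rw [hc, hphi, hu]; ring
            rw [heq] at h5
            linarith
      _ = 1 + lam * m + (∫ x, (Z x) ^ 2 ∂Q) * c := by
            rw [integral_add (integrable_const 1) hg2,
              integral_add (hZint.const_mul lam) (hZ2int.mul_const c),
              integral_const_mul, integral_mul_const, ← hm]
            simp [add_assoc]
      _ ≤ 1 + lam * m + v * c := by
            have := mul_le_mul_of_nonneg_right hvar hc0
            linarith
    have h2 : ∫ x, Real.exp (lam * (Z x - m)) ∂Q
        = Real.exp (-(lam * m)) * ∫ x, Real.exp (lam * Z x) ∂Q := by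
      rw [← integral_const_mul]
      refine integral_congr_ae (Filter.Eventually.of_forall fun x => ?_)
      show Real.exp (lam * (Z x - m)) = Real.exp (-(lam * m)) * Real.exp (lam * Z x)
      rw [← Real.exp_add]
      congr 1
      ring
    rw [h2]
    calc Real.exp (-(lam * m)) * ∫ x, Real.exp (lam * Z x) ∂Q
        ≤ Real.exp (-(lam * m)) * (1 + lam * m + v * c) :=
          mul_le_mul_of_nonneg_left h1 (Real.exp_pos _).le
    _ ≤ Real.exp (-(lam * m)) * Real.exp (lam * m + v * c) := by
          refine mul_le_mul_of_nonneg_left ?_ (Real.exp_pos _).le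
          linarith [Real.add_one_le_exp (lam * m + v * c)]
    _ = Real.exp (v * c) := by rw [← Real.exp_add]; ring_nf
  -- independence of the centered variables
  have hYmeas : ∀ i : Fin n, Measurable (fun ω => Z (Xs i ω) - m) :=
    fun i => (hZmeas.comp (hXmeas i)).sub measurable_const
  have hYindep : iIndepFun (fun i ω => Z (Xs i ω) - m) μ :=
    hindep.comp (fun _ x => Z x - m) (fun _ => hZmeas.sub measurable_const)
  -- a.e. bounds pulled back
  have hbdω : ∀ i : Fin n, ∀ᵐ ω ∂μ, |Z (Xs i ω)| ≤ b := by
    intro i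
    exact ae_of_ae_map (p := fun y => |Z y| ≤ b) (hXmeas i).aemeasurable
      (by rw [hid i]; exact hbd)
  have hsum_bd : ∀ᵐ ω ∂μ, |∑ i, (Z (Xs i ω) - m)| ≤ (n : ℝ) * (2 * b) := by
    filter_upwards [ae_all_iff.mpr hbdω] with ω hω
    calc |∑ i, (Z (Xs i ω) - m)| ≤ ∑ i, |Z (Xs i ω) - m| := Finset.abs_sum_le_sum_abs _ _
    _ ≤ ∑ _i : Fin n, (2 * b) := by
        refine Finset.sum_le_sum fun i _ => ?_
        have h3 : |Z (Xs i ω) - m| ≤ |Z (Xs i ω)| + |m| := by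
          rw [sub_eq_add_neg]
          exact (abs_add_le _ _).trans_eq (by rw [abs_neg])
        linarith [hω i, hmb]
    _ = (n : ℝ) * (2 * b) := by simp [Finset.sum_const, Finset.card_univ, mul_comm]
  have hint_sum : Integrable (fun ω => Real.exp (lam * ∑ i, (Z (Xs i ω) - m))) μ := by
    refine Integrable.mono' (integrable_const (Real.exp (lam * ((n : ℝ) * (2 * b)))))
      (((Finset.measurable_sum Finset.univ fun i _ => hYmeas i).const_mul lam).exp.aestronglyMeasurable) ?_
    filter_upwards [hsum_bd] with ω hω
    rw [Real.norm_eq_abs, abs_of_pos (Real.exp_pos _), Real.exp_le_exp]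
    exact mul_le_mul_of_nonneg_left (le_trans (le_abs_self _) hω) hlam0
  -- Chernoff
  have hch := measure_ge_le_exp_mul_mgf (μ := μ) (X := fun ω => ∑ i, (Z (Xs i ω) - m))
    x₀ hlam0 hint_sum
  have hfun : (fun ω => ∑ i, (Z (Xs i ω) - m)) = ∑ i, (fun ω => Z (Xs i ω) - m) := by
    funext ω; simp
  have hmgfsum : mgf (fun ω => ∑ i, (Z (Xs i ω) - m)) μ lam ≤ Real.exp ((n : ℝ) * (v * c)) := by
    rw [hfun, hYindep.mgf_sum hYmeas]
    calc ∏ i : Fin n, mgf (fun ω => Z (Xs i ω) - m) μ lam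
        ≤ ∏ _i : Fin n, Real.exp (v * c) :=
          Finset.prod_le_prod (fun i _ => mgf_nonneg) (fun i _ => hmgf i)
    _ = Real.exp ((n : ℝ) * (v * c)) := by
        rw [Finset.prod_const, ← Real.exp_nat_mul]
        simp [Finset.card_univ]
  -- exponent computation
  have hexp : -lam * x₀ + (n : ℝ) * (v * c) ≤ -L := by
    have hKey := lemD u hu0
    have huD : u * D = s * b := by
      rw [hu, hlam]; field_simp
    have h3 : phi * (3 * N) * D ≤ 3 / 2 * (s ^ 2 * b ^ 2) := by
      have h3u : (3 - u) * D = 3 * N := by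
        linear_combination 3 * hD - huD
      have h2' := mul_le_mul_of_nonneg_right hKey (sq_nonneg D)
      have hu2 : u ^ 2 * D ^ 2 = s ^ 2 * b ^ 2 := by
        rw [← mul_pow, huD, mul_pow]
      calc phi * (3 * N) * D = (Real.exp u - 1 - u) * (3 - u) * D ^ 2 := by
            rw [hphi, ← h3u]; ring
      _ ≤ 3 / 2 * u ^ 2 * D ^ 2 := h2'
      _ = 3 / 2 * (s ^ 2 * b ^ 2) := by rw [mul_assoc, hu2]
    have hNphi : N * phi * D ≤ N * L * b ^ 2 := by
      have e1 : N * phi * D = phi * (3 * N) * D / 3 := by ring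
      have e2 : N * L * b ^ 2 = 3 / 2 * (s ^ 2 * b ^ 2) / 3 := by rw [hs2]; ring
      rw [e1, e2]
      exact (div_le_div_iff_of_pos_right (by norm_num)).mpr h3
    have hNcD : N * c * D ≤ N * L := by
      have hrw : N * c * D = (N * phi * D) / b ^ 2 := by rw [hc]; ring
      rw [hrw, div_le_iff₀ (by positivity : (0:ℝ) < b ^ 2)]
      exact hNphi
    have hlamx : lam * x₀ = (2 * N * L + s * b * L / 3) / D := by
      rw [hlam, hx0, div_mul_eq_mul_div]
      congr 1
      linear_combination hs2
    have hfinal : L + N * c ≤ (2 * N * L + s * b * L / 3) / D := by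
      rw [le_div_iff₀ hD0]
      calc (L + N * c) * D = L * D + N * c * D := by ring
      _ ≤ L * (N + b * s / 3) + N * L := by rw [← hD]; linarith [hNcD]
      _ = 2 * N * L + s * b * L / 3 := by ring
    have hNc : (n : ℝ) * (v * c) = N * c := by rw [hN]; ring
    rw [hNc, neg_mul, hlamx]
    linarith [hfinal]
  -- conclude
  have htoReal : (μ {ω | x₀ ≤ ∑ i, (Z (Xs i ω) - m)}).toReal ≤ Real.exp (-L) := by
    calc (μ {ω | x₀ ≤ ∑ i, (Z (Xs i ω) - m)}).toReal
        ≤ Real.exp (-lam * x₀) * mgf (fun ω => ∑ i, (Z (Xs i ω) - m)) μ lam := hch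
    _ ≤ Real.exp (-lam * x₀) * Real.exp ((n : ℝ) * (v * c)) :=
        mul_le_mul_of_nonneg_left hmgfsum (Real.exp_pos _).le
    _ = Real.exp (-lam * x₀ + (n : ℝ) * (v * c)) := (Real.exp_add _ _).symm
    _ ≤ Real.exp (-L) := Real.exp_le_exp.mpr hexp
  exact (ENNReal.le_ofReal_iff_toReal_le (measure_ne_top _ _) (Real.exp_pos _).le).mpr htoReal

private lemma trunc_diff_le {l τ α : ℝ} (hl : 0 ≤ l) (hτ : 0 < τ) (hα1 : 1 < α) :
    l - min l τ ≤ τ ^ (1 - α) * l ^ α := by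
  rcases le_or_gt l τ with hlτ | hlτ
  · rw [min_eq_left hlτ, sub_self]
    exact mul_nonneg (Real.rpow_nonneg hτ.le _) (Real.rpow_nonneg hl _)
  · rw [min_eq_right hlτ.le]
    have hl0 : 0 < l := hτ.trans hlτ
    have h1 : l = l ^ α * l ^ (1 - α) := by
      rw [← Real.rpow_add hl0]; norm_num
    have h2 : l ^ (1 - α) ≤ τ ^ (1 - α) :=
      Real.rpow_le_rpow_of_nonpos hτ hlτ.le (by linarith)
    have h3 : l ≤ τ ^ (1 - α) * l ^ α := by
      calc l = l ^ α * l ^ (1 - α) := h1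
      _ ≤ l ^ α * τ ^ (1 - α) := mul_le_mul_of_nonneg_left h2 (Real.rpow_nonneg hl0.le _)
      _ = τ ^ (1 - α) * l ^ α := mul_comm _ _
    linarith [hτ.le, min_le_right l τ]
    
private lemma trunc_sq_le {l τ α : ℝ} (hl : 0 ≤ l) (hτ : 0 < τ) (hα1 : 1 < α) (hα2 : α ≤ 2) :
    (min l τ) ^ 2 ≤ τ ^ (2 - α) * l ^ α := by
  rcases eq_or_lt_of_le hl with hl0 | hl0
  · rw [← hl0, min_eq_left hτ.le]
    norm_num
    exact mul_nonneg (Real.rpow_nonneg hτ.le _) (Real.rpow_nonneg le_rfl _)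
  rcases le_or_gt l τ with hlτ | hlτ
  · rw [min_eq_left hlτ]
    have h1 : (l:ℝ) ^ (2:ℕ) = l ^ α * l ^ (2 - α) := by
      rw [← Real.rpow_add hl0, ← Real.rpow_natCast l 2]
      norm_num
    rw [h1]
    calc l ^ α * l ^ (2 - α) ≤ l ^ α * τ ^ (2 - α) :=
        mul_le_mul_of_nonneg_left (Real.rpow_le_rpow hl0.le hlτ (by linarith))
          (Real.rpow_nonneg hl0.le _)
    _ = τ ^ (2 - α) * l ^ α := mul_comm _ _
  · rw [min_eq_right hlτ.le]
    have h1 : (τ:ℝ) ^ (2:ℕ) = τ ^ α * τ ^ (2 - α) := by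
      rw [← Real.rpow_add hτ, ← Real.rpow_natCast τ 2]
      norm_num
    rw [h1]
    calc τ ^ α * τ ^ (2 - α) ≤ l ^ α * τ ^ (2 - α) :=
        mul_le_mul_of_nonneg_right (Real.rpow_le_rpow hτ.le hlτ.le (by linarith))
          (Real.rpow_nonneg hτ.le _)
    _ = τ ^ (2 - α) * l ^ α := mul_comm _ _

/-- Bernstein-plus-bias concentration bound for the truncated likelihood-ratio
estimator under the `∞`-norm. -/
theorem truncated_lr_concentration_inftyNorm
    {X : Type*} [MeasurableSpace X] {Ω : Type*} [MeasurableSpace Ω]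
    (P Q : Measure X) [IsProbabilityMeasure P] [IsProbabilityMeasure Q]
    (hPQ : P ≪ Q) (h : X → ℝ) (hmeas : Measurable h)
    (hinf : eLpNorm h ⊤ Q < ⊤)
    (α : ℝ) (hα1 : 1 < α) (hα2 : α ≤ 2)
    (hI : Integrable (fun x => lr P Q x ^ α) Q)
    (τ : ℝ) (hτ : 0 < τ)
    (μ : Measure Ω) [IsProbabilityMeasure μ]
    (n : ℕ) (hn : 0 < n) (Xs : Fin n → Ω → X)
    (hXmeas : ∀ i, Measurable (Xs i))
    (hid : ∀ i, Measure.map (Xs i) μ = Q)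
    (hindep : iIndepFun Xs μ)
    (δ : ℝ) (hδ0 : 0 < δ) (hδ1 : δ < 1) :
    ENNReal.ofReal (1 - δ) ≤
      μ {ω | |(1 / (n : ℝ)) * ∑ i, h (Xs i ω) * min (lr P Q (Xs i ω)) τ - ∫ x, h x ∂P| ≤
        (eLpNorm h ⊤ Q).toReal *
          (Real.sqrt (2 * τ ^ (2 - α) * Real.log (2 / δ) * Ialpha P Q α / n)
            + τ * Real.log (2 / δ) / (3 * n)
            + τ ^ (1 - α) * Ialpha P Q α)} := by
  classical
  set M := (eLpNorm h ⊤ Q).toReal with hMdef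
  have hM0 : 0 ≤ M := ENNReal.toReal_nonneg
  have hlmeas : Measurable (lr P Q) := (Measure.measurable_rnDeriv P Q).ennreal_toReal
  have hlnn : ∀ x, 0 ≤ lr P Q x := fun x => ENNReal.toReal_nonneg
  set I := Ialpha P Q α with hIdef
  have hI0 : 0 ≤ I := integral_nonneg fun x => Real.rpow_nonneg (hlnn x) α
  set L := Real.log (2 / δ) with hLdef
  have hL0 : 0 < L := Real.log_pos (by rw [lt_div_iff₀ hδ0]; linarith)
  have hMe : M = (eLpNormEssSup h Q).toReal := by rw [hMdef, eLpNorm_exponent_top]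
  have hinf' : eLpNormEssSup h Q ≠ ⊤ := by
    rw [eLpNorm_exponent_top] at hinf; exact hinf.ne
  have hhM : ∀ᵐ x ∂Q, |h x| ≤ M := by
    filter_upwards [ae_le_eLpNormEssSup (f := h) (μ := Q)] with x hx
    have h2 : ((‖h x‖₊ : ℝ≥0∞)).toReal ≤ (eLpNormEssSup h Q).toReal :=
      ENNReal.toReal_mono hinf' hx
    rw [hMe]
    simpa [Real.norm_eq_abs] using h2
  set Z : X → ℝ := fun x => h x * min (lr P Q x) τ with hZdef
  have hZmeas : Measurable Z := hmeas.mul (hlmeas.min measurable_const)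
  have hminnn : ∀ x, 0 ≤ min (lr P Q x) τ := fun x => le_min (hlnn x) hτ.le
  have hZbd : ∀ᵐ x ∂Q, |Z x| ≤ M * τ := by
    filter_upwards [hhM] with x hx
    rw [hZdef]
    simp only
    rw [abs_mul]
    refine mul_le_mul hx ?_ (abs_nonneg _) hM0
    rw [abs_of_nonneg (hminnn x)]
    exact min_le_right _ _
  have hZint : Integrable Z Q :=
    Integrable.mono' (integrable_const (M * τ)) hZmeas.aestronglyMeasurable
      (by simpa using hZbd)
  set m := ∫ x, Z x ∂Q with hmdef
  have hEP : ∫ x, h x ∂P = ∫ x, lr P Q x * h x ∂Q := by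
    rw [← integral_rnDeriv_smul hPQ (f := h)]
    simp [lr, smul_eq_mul]
  have hlint : Integrable (lr P Q) Q := Measure.integrable_toReal_rnDeriv
  have hlh_int : Integrable (fun x => lr P Q x * h x) Q := by
    refine Integrable.mono' (hlint.const_mul M) (hlmeas.mul hmeas).aestronglyMeasurable ?_
    filter_upwards [hhM] with x hx
    rw [Real.norm_eq_abs, abs_mul, abs_of_nonneg (hlnn x)]
    calc lr P Q x * |h x| ≤ lr P Q x * M := mul_le_mul_of_nonneg_left hx (hlnn x)
    _ = M * lr P Q x := mul_comm _ _
  -- bias bound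
  have hbias : |m - ∫ x, h x ∂P| ≤ M * (τ ^ (1 - α) * I) := by
    rw [hEP, hmdef, ← integral_sub hZint hlh_int]
    have habs : |∫ x, (Z x - lr P Q x * h x) ∂Q| ≤ ∫ x, ‖Z x - lr P Q x * h x‖ ∂Q := by
      rw [← Real.norm_eq_abs]
      exact norm_integral_le_integral_norm _
    refine habs.trans ?_
    have hRHSint : Integrable (fun x => M * (τ ^ (1 - α) * lr P Q x ^ α)) Q :=
      (hI.const_mul _).const_mul _
    have hle : ∫ x, ‖Z x - lr P Q x * h x‖ ∂Q
        ≤ ∫ x, M * (τ ^ (1 - α) * lr P Q x ^ α) ∂Q := by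
      refine integral_mono_ae ((hZint.sub hlh_int).norm) hRHSint ?_
      filter_upwards [hhM] with x hx
      rw [Real.norm_eq_abs]
      have e1 : Z x - lr P Q x * h x = h x * (min (lr P Q x) τ - lr P Q x) := by
        rw [hZdef]; ring
      have hmin : min (lr P Q x) τ - lr P Q x ≤ 0 := sub_nonpos.mpr (min_le_left _ _)
      rw [e1, abs_mul, abs_of_nonpos hmin]
      have h2 := trunc_diff_le (hlnn x) hτ hα1
      refine mul_le_mul hx ?_ (by linarith) hM0
      linarith
    have heq : ∫ x, M * (τ ^ (1 - α) * lr P Q x ^ α) ∂Q = M * (τ ^ (1 - α) * I) := by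
      rw [integral_const_mul, integral_const_mul, hIdef]
      rfl
    exact hle.trans (le_of_eq heq)
  -- second moment bound
  have hZ2int : Integrable (fun x => (Z x) ^ 2) Q := by
    refine Integrable.mono' (integrable_const ((M * τ) ^ 2))
      (hZmeas.pow_const 2).aestronglyMeasurable ?_
    filter_upwards [hZbd] with x hx
    rw [Real.norm_eq_abs, abs_of_nonneg (sq_nonneg _), ← sq_abs]
    exact pow_le_pow_left₀ (abs_nonneg _) hx 2
  have hvar : ∫ x, (Z x) ^ 2 ∂Q ≤ M ^ 2 * τ ^ (2 - α) * I := by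
    have hRHSint : Integrable (fun x => M ^ 2 * τ ^ (2 - α) * lr P Q x ^ α) Q :=
      hI.const_mul _
    have hle : ∫ x, (Z x) ^ 2 ∂Q ≤ ∫ x, M ^ 2 * τ ^ (2 - α) * lr P Q x ^ α ∂Q := by
      refine integral_mono_ae hZ2int hRHSint ?_
      filter_upwards [hhM] with x hx
      have e1 : (Z x) ^ 2 = (h x) ^ 2 * (min (lr P Q x) τ) ^ 2 := by
        rw [hZdef]; ring
      rw [e1]
      have h2 : (h x) ^ 2 ≤ M ^ 2 := by
        rw [← sq_abs]; exact pow_le_pow_left₀ (abs_nonneg _) hx 2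
      have h3 := trunc_sq_le (hlnn x) hτ hα1 hα2
      have h4 : (h x) ^ 2 * (min (lr P Q x) τ) ^ 2
          ≤ M ^ 2 * (τ ^ (2 - α) * lr P Q x ^ α) :=
        mul_le_mul h2 h3 (sq_nonneg _) (by positivity)
      linarith [h4]
    have heq : ∫ x, M ^ 2 * τ ^ (2 - α) * lr P Q x ^ α ∂Q = M ^ 2 * τ ^ (2 - α) * I := by
      rw [integral_const_mul, hIdef]
      rfl
    exact hle.trans (le_of_eq heq)
  -- final assembly
  have hnpos : (0:ℝ) < n := Nat.cast_pos.mpr hn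
  have hexpL : Real.exp (-L) = δ / 2 := by
    rw [hLdef, Real.exp_neg, Real.exp_log (by positivity), inv_div]
  set R := M * (Real.sqrt (2 * τ ^ (2 - α) * L * I / (n : ℝ)) + τ * L / (3 * (n : ℝ))
    + τ ^ (1 - α) * I) with hRdef
  suffices hgoal : ENNReal.ofReal (1 - δ) ≤
      μ {ω | |(1 / (n : ℝ)) * ∑ i, Z (Xs i ω) - ∫ x, h x ∂P| ≤ R} from hgoal
  set S := {ω | |(1 / (n : ℝ)) * ∑ i, Z (Xs i ω) - ∫ x, h x ∂P| ≤ R} with hSdef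
  have hstatmeas : Measurable fun ω => |(1 / (n : ℝ)) * ∑ i, Z (Xs i ω) - ∫ x, h x ∂P| :=
    (((Finset.measurable_sum Finset.univ fun i _ => hZmeas.comp (hXmeas i)).const_mul
      (1 / (n : ℝ))).sub measurable_const).abs
  have hSmeas : MeasurableSet S := by
    rw [hSdef]
    exact measurableSet_le hstatmeas measurable_const
  rcases eq_or_lt_of_le hM0 with hMeq | hMpos
  · -- degenerate case M = 0
    have hh0 : ∀ᵐ x ∂Q, h x = 0 := by
      filter_upwards [hhM] with x hx
      rw [← hMeq] at hx
      exact abs_nonpos_iff.mp hx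
    have hh0' : h =ᵐ[Q] (fun _ => (0:ℝ)) := hh0
    have hP0 : ∫ x, h x ∂P = 0 := by
      rw [integral_congr_ae (hPQ.ae_eq hh0')]
      simp
    have hfull : ∀ᵐ ω ∂μ, ω ∈ S := by
      have hZ0 : ∀ i : Fin n, ∀ᵐ ω ∂μ, h (Xs i ω) = 0 := fun i =>
        ae_of_ae_map (p := fun y => h y = 0) (hXmeas i).aemeasurable (by rw [hid i]; exact hh0)
      filter_upwards [ae_all_iff.mpr hZ0] with ω hω
      rw [hSdef]
      simp only [Set.mem_setOf_eq]
      have hsum : ∑ i, Z (Xs i ω) = 0 := Finset.sum_eq_zero fun i _ => by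
        rw [hZdef]; simp [hω i]
      rw [hsum, hP0, hRdef, ← hMeq]
      simp
    have hc0 : μ Sᶜ = 0 := by
      have := ae_iff.mp hfull
      exact this
    calc ENNReal.ofReal (1 - δ) ≤ 1 := by
          rw [← ENNReal.ofReal_one]
          exact ENNReal.ofReal_le_ofReal (by linarith)
    _ = μ Set.univ := measure_univ.symm
    _ = μ (S ∪ Sᶜ) := by rw [Set.union_compl_self]
    _ ≤ μ S + μ Sᶜ := measure_union_le _ _
    _ = μ S := by rw [hc0, add_zero]
  · -- main case M > 0
    have hIpos : 0 < I := by
      rcases eq_or_lt_of_le hI0 with hIeq | h'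
      · exfalso
        have h1 : (fun x => lr P Q x ^ α) =ᵐ[Q] 0 := by
          refine (integral_eq_zero_iff_of_nonneg_ae
            (Filter.Eventually.of_forall fun x => Real.rpow_nonneg (hlnn x) α) hI).mp ?_
          exact (hIeq.symm : I = 0)
        have h2 : lr P Q =ᵐ[Q] (fun _ => (0:ℝ)) := by
          filter_upwards [h1] with x hx
          simp only [Pi.zero_apply] at hx
          by_contra hne
          have hpos : 0 < lr P Q x := lt_of_le_of_ne (hlnn x) (Ne.symm hne)
          have := Real.rpow_pos_of_pos hpos α
          linarith
        have h3 : ∫ x, lr P Q x ∂Q = 1 := by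
          have h4 := Measure.integral_toReal_rnDeriv hPQ
          rw [show ∫ x, lr P Q x ∂Q = ∫ x, (P.rnDeriv Q x).toReal ∂Q from rfl, h4]
          simp
        rw [integral_congr_ae h2] at h3
        simp at h3
      · exact h'
    set v := M ^ 2 * τ ^ (2 - α) * I with hvdef
    have hvpos : 0 < v := by
      rw [hvdef]
      have := Real.rpow_pos_of_pos hτ (2 - α)
      positivity
    set b := M * τ with hbdef
    have hbpos : 0 < b := by rw [hbdef]; positivity
    have hA1 := bernstein_one_sided' Q μ n hn Xs hXmeas hid hindep Z hZmeas b hbpos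
      hZbd v hvpos hvar L hL0
    have hA2 := bernstein_one_sided' Q μ n hn Xs hXmeas hid hindep (fun x => -Z x) hZmeas.neg
      b hbpos (by filter_upwards [hZbd] with x hx; simpa using hx) v hvpos
      (by simpa [neg_sq] using hvar) L hL0
    rw [integral_neg] at hA2
    rw [← hmdef] at hA1 hA2
    have hsumneg : ∀ ω : Ω, (∑ i, (-Z (Xs i ω) - -m)) = -∑ i, (Z (Xs i ω) - m) := by
      intro ω
      rw [← Finset.sum_neg_distrib]
      exact Finset.sum_congr rfl fun i _ => by ring
    simp only [hsumneg] at hA2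
    set x₀ := Real.sqrt (2 * ((n : ℝ) * v) * L) + b * L / 3 with hx0def
    have hx0eq : x₀ = (n : ℝ) * (M * Real.sqrt (2 * τ ^ (2 - α) * L * I / (n : ℝ))
        + M * (τ * L / (3 * (n : ℝ)))) := by
      rw [hx0def, hvdef, hbdef, mul_add]
      congr 1
      · rw [show (n:ℝ) * (M * Real.sqrt (2 * τ ^ (2 - α) * L * I / (n:ℝ)))
            = ((n:ℝ) * M) * Real.sqrt (2 * τ ^ (2 - α) * L * I / (n:ℝ)) from by ring]
        rw [← Real.sqrt_sq (show (0:ℝ) ≤ (n:ℝ) * M by positivity),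
          ← Real.sqrt_mul (by positivity)]
        congr 1
        field_simp
      · field_simp
    have hincl : Sᶜ ⊆ {ω | x₀ ≤ ∑ i, (Z (Xs i ω) - m)}
        ∪ {ω | x₀ ≤ -∑ i, (Z (Xs i ω) - m)} := by
      intro ω hω
      rw [Set.mem_compl_iff, hSdef, Set.mem_setOf_eq, not_le] at hω
      simp only [Set.mem_union, Set.mem_setOf_eq]
      set Sw := ∑ i, (Z (Xs i ω) - m) with hSw
      have hkey : Sw = (∑ i, Z (Xs i ω)) - (n:ℝ) * m := by
        rw [hSw, Finset.sum_sub_distrib, Finset.sum_const, Finset.card_univ,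
          Fintype.card_fin, nsmul_eq_mul]
      have habs2 : |(1 / (n : ℝ)) * ∑ i, Z (Xs i ω) - ∫ x, h x ∂P|
          ≤ |Sw| / n + M * (τ ^ (1 - α) * I) := by
        have e2 : (1 / (n : ℝ)) * ∑ i, Z (Xs i ω) - ∫ x, h x ∂P
            = Sw / n + (m - ∫ x, h x ∂P) := by
          rw [hkey]; field_simp; ring
        rw [e2]
        refine (abs_add_le _ _).trans ?_
        rw [abs_div, abs_of_pos hnpos]
        exact add_le_add le_rfl hbias
      have ht1 : x₀ < |Sw| := by
        rw [hx0eq]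
        have hRexp : R = (M * Real.sqrt (2 * τ ^ (2 - α) * L * I / (n:ℝ))
            + M * (τ * L / (3 * (n:ℝ)))) + M * (τ ^ (1 - α) * I) := by
          rw [hRdef]; ring
        have h6 : M * Real.sqrt (2 * τ ^ (2 - α) * L * I / (n:ℝ))
            + M * (τ * L / (3 * (n:ℝ))) < |Sw| / n := by
          rw [hRexp] at hω
          linarith [habs2]
        calc (n:ℝ) * (M * Real.sqrt (2 * τ ^ (2 - α) * L * I / (n:ℝ))
            + M * (τ * L / (3 * (n:ℝ)))) < (n:ℝ) * (|Sw| / n) :=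
              (mul_lt_mul_iff_right₀ hnpos).mpr h6
        _ = |Sw| := by field_simp
      rcases le_or_gt 0 Sw with hsw | hsw
      · left
        rw [abs_of_nonneg hsw] at ht1
        exact ht1.le
      · right
        rw [abs_of_neg hsw] at ht1
        exact ht1.le
    have hcompl : μ Sᶜ ≤ ENNReal.ofReal δ := by
      calc μ Sᶜ ≤ μ ({ω | x₀ ≤ ∑ i, (Z (Xs i ω) - m)}
            ∪ {ω | x₀ ≤ -∑ i, (Z (Xs i ω) - m)}) := measure_mono hincl
      _ ≤ μ {ω | x₀ ≤ ∑ i, (Z (Xs i ω) - m)}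
            + μ {ω | x₀ ≤ -∑ i, (Z (Xs i ω) - m)} := measure_union_le _ _
      _ ≤ ENNReal.ofReal (Real.exp (-L)) + ENNReal.ofReal (Real.exp (-L)) :=
            add_le_add hA1 hA2
      _ = ENNReal.ofReal δ := by
            rw [hexpL, ← ENNReal.ofReal_add (by positivity) (by positivity)]
            norm_num
    have hsum1 : μ S + μ Sᶜ = 1 := by
      rw [measure_add_measure_compl hSmeas, measure_univ]
    calc ENNReal.ofReal (1 - δ) = 1 - ENNReal.ofReal δ := by
          rw [ENNReal.ofReal_sub 1 hδ0.le, ENNReal.ofReal_one]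
    _ ≤ 1 - μ Sᶜ := tsub_le_tsub_left hcompl 1
    _ ≤ μ S := by
          rw [← hsum1, ENNReal.add_sub_cancel_right (measure_ne_top μ Sᶜ)]
end

section
/- For k ∈ [1,2], the function g(x) = √2·x^{k−1} + (1/3)x^k + x^{k−2} is strictly convex on (0,∞). -/
open Real Set

private lemma hasDerivAt_g (k x : ℝ) (hx : 0 < x) :
    HasDerivAt (fun x : ℝ => Real.sqrt 2 * x ^ (k - 1) + (1 / 3) * x ^ k + x ^ (k - 2))
      (Real.sqrt 2 * ((k-1) * x ^ (k-2)) + (1/3) * (k * x ^ (k-1)) + (k-2) * x ^ (k-3)) x := by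
  have h1 := (Real.hasDerivAt_rpow_const (p := k - 1) (Or.inl hx.ne')).const_mul (Real.sqrt 2)
  have h2 := (Real.hasDerivAt_rpow_const (p := k) (Or.inl hx.ne')).const_mul (1/3 : ℝ)
  have h3 := Real.hasDerivAt_rpow_const (p := k - 2) (Or.inl hx.ne') (x := x)
  have := (h1.add h2).add h3
  refine this.congr_deriv ?_
  ring_nf

private lemma hasDerivAt_g' (k x : ℝ) (hx : 0 < x) :
    HasDerivAt (fun x : ℝ => Real.sqrt 2 * ((k-1) * x ^ (k-2)) + (1/3) * (k * x ^ (k-1)) + (k-2) * x ^ (k-3))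
      (Real.sqrt 2 * ((k-1) * ((k-2) * x ^ (k-3))) + (1/3) * (k * ((k-1) * x ^ (k-2))) + (k-2) * ((k-3) * x ^ (k-4))) x := by
  have h1 := ((Real.hasDerivAt_rpow_const (p := k - 2) (Or.inl hx.ne') (x := x)).const_mul (k-1)).const_mul (Real.sqrt 2)
  have h2 := ((Real.hasDerivAt_rpow_const (p := k - 1) (Or.inl hx.ne') (x := x)).const_mul k).const_mul (1/3 : ℝ)
  have h3 := (Real.hasDerivAt_rpow_const (p := k - 3) (Or.inl hx.ne') (x := x)).const_mul (k-2)
  have := (h1.add h2).add h3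
  refine this.congr_deriv ?_
  ring_nf

/-- For `k ∈ [1,2]`, the function `g(x) = √2·x^{k−1} + (1/3)x^k + x^{k−2}` is
strictly convex on `(0,∞)`. -/
theorem strictConvexOn_truncation_objective (k : ℝ) (hk1 : 1 ≤ k) (hk2 : k ≤ 2) :
    StrictConvexOn ℝ (Set.Ioi (0 : ℝ))
      (fun x : ℝ => Real.sqrt 2 * x ^ (k - 1) + (1 / 3) * x ^ k + x ^ (k - 2)) := by
  set f : ℝ → ℝ := fun x : ℝ => Real.sqrt 2 * x ^ (k - 1) + (1 / 3) * x ^ k + x ^ (k - 2) with hf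
  set f' : ℝ → ℝ := fun x : ℝ => Real.sqrt 2 * ((k-1) * x ^ (k-2)) + (1/3) * (k * x ^ (k-1)) + (k-2) * x ^ (k-3) with hf'
  have hderiv : ∀ x ∈ Ioi (0:ℝ), deriv f x = f' x := fun x hx =>
    (hasDerivAt_g k x hx).deriv
  apply strictConvexOn_of_deriv2_pos (convex_Ioi 0)
  · intro x hx
    exact ((hasDerivAt_g k x hx).continuousAt).continuousWithinAt
  · intro x hx
    rw [interior_Ioi] at hx
    have hev : deriv f =ᶠ[nhds x] f' :=
      Filter.eventuallyEq_of_mem (Ioi_mem_nhds hx) hderiv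
    have h2 : deriv (deriv f) x = deriv f' x := hev.deriv_eq
    have h3 : deriv f' x = Real.sqrt 2 * ((k-1) * ((k-2) * x ^ (k-3))) + (1/3) * (k * ((k-1) * x ^ (k-2))) + (k-2) * ((k-3) * x ^ (k-4)) :=
      (hasDerivAt_g' k x hx).deriv
    have key : deriv^[2] f x = x ^ (k-4) * (Real.sqrt 2 * (k-1) * (k-2) * x + (1/3) * k * (k-1) * x^2 + (k-2)*(k-3)) := by
      rw [show deriv^[2] f = deriv (deriv f) from rfl, h2, h3]
      have e1 : x ^ (k-3) = x ^ (k-4) * x := by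
        rw [show k - 3 = (k-4) + 1 by ring, Real.rpow_add hx, Real.rpow_one]
      have e2 : x ^ (k-2) = x ^ (k-4) * x^2 := by
        rw [show k - 2 = (k-4) + 2 by ring, Real.rpow_add hx, show ((2:ℝ)) = ((2:ℕ):ℝ) by norm_num, Real.rpow_natCast]
      rw [e1, e2]; ring
    rw [key]
    have hB : 0 < Real.sqrt 2 * (k-1) * (k-2) * x + (1/3) * k * (k-1) * x^2 + (k-2)*(k-3) := by
      have hs : Real.sqrt 2 ^ 2 = 2 := Real.sq_sqrt (by norm_num)
      have hs0 : 0 < Real.sqrt 2 := Real.sqrt_pos.2 (by norm_num)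
      rcases eq_or_lt_of_le hk2 with h2' | h2'
      · subst h2'; nlinarith [mul_pos (show (0:ℝ) < x from hx) hx]
      · nlinarith [mul_nonneg (sub_nonneg.2 hk1) (sq_nonneg (2*k*x - 3*Real.sqrt 2*(2-k))),
          mul_pos (mul_pos (sub_pos.2 h2') (by nlinarith : (0:ℝ) < k^2 - 3*k + 6)) (by positivity : (0:ℝ) < 2*k),
          mul_pos (show (0:ℝ) < x from hx) hx]
    exact mul_pos (Real.rpow_pos_of_pos hx _) hB
end

section
/- If ‖h‖_{∞,Q} < ∞ and I_α(P‖Q) < ∞ for some α ∈ (1,2], then choosing the truncation boundary τ_n = (n·I_α(P‖Q)/ln(2/δ))^{1/α}, the truncated likelihood ratio estimator satisfies, for all δ ∈ (0,1): Pr( |h̄_n^{Tru} − E_P[h]| ≤ ‖h‖_{∞,Q}(√2 + 4/3)(ln(2/δ)/n)^{1−1/α} I_α(P‖Q)^{1/α} ) ≥ 1 − δ. -/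
open MeasureTheory ProbabilityTheory



private lemma aux_deriv_nonneg (t : ℝ) : 0 ≤ 2/3 - (2/3 - 2*t/3) * Real.exp t := by
  have h1 : 1 - t ≤ Real.exp (-t) := by linarith [Real.add_one_le_exp (-t)]
  have h2 : Real.exp (-t) * Real.exp t = 1 := by rw [← Real.exp_add]; simp
  nlinarith [Real.exp_pos t]

private lemma hasDerivAt_G (t : ℝ) :
    HasDerivAt (fun t : ℝ => 4/3 + 2*t/3 - (4/3 - 2*t/3) * Real.exp t)
      (2/3 - (2/3 - 2*t/3) * Real.exp t) t := by
  have h1 : HasDerivAt (fun t : ℝ => 4/3 - 2*t/3) (-(2/3)) t := by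
    simpa using ((hasDerivAt_id t).const_mul (2:ℝ)).div_const 3 |>.const_sub (4/3)
  have h2 : HasDerivAt (fun t : ℝ => (4/3 - 2*t/3) * Real.exp t)
      ((-(2/3)) * Real.exp t + (4/3 - 2*t/3) * Real.exp t) t := h1.mul (Real.hasDerivAt_exp t)
  have h3 : HasDerivAt (fun t : ℝ => 4/3 + 2*t/3) (2/3) t := by
    simpa using ((hasDerivAt_id t).const_mul (2:ℝ)).div_const 3 |>.const_add (4/3)
  exact (h3.sub h2).congr_deriv (by ring)

private lemma hasDerivAt_F (t : ℝ) :
    HasDerivAt (fun t : ℝ => 2 + 4*t/3 + t^2/3 - (2 - 2*t/3) * Real.exp t)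
      (4/3 + 2*t/3 - (4/3 - 2*t/3) * Real.exp t) t := by
  have h1 : HasDerivAt (fun t : ℝ => 2 - 2*t/3) (-(2/3)) t := by
    simpa using ((hasDerivAt_id t).const_mul (2:ℝ)).div_const 3 |>.const_sub 2
  have h2 : HasDerivAt (fun t : ℝ => (2 - 2*t/3) * Real.exp t)
      ((-(2/3)) * Real.exp t + (2 - 2*t/3) * Real.exp t) t := h1.mul (Real.hasDerivAt_exp t)
  have h3 : HasDerivAt (fun t : ℝ => 2 + 4*t/3 + t^2/3) (4/3 + 2*t/3) t := by
    have := (((hasDerivAt_id t).const_mul (4:ℝ)).div_const 3).const_add (2:ℝ)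
    have h4 : HasDerivAt (fun t : ℝ => t^2/3) (2*t/3) t := by
      simpa using (hasDerivAt_pow 2 t).div_const 3
    exact (this.add h4).congr_deriv (by ring)
  exact (h3.sub h2).congr_deriv (by ring)

private lemma aux_exp_key (t : ℝ) : (2 - 2*t/3) * Real.exp t ≤ 2 + 4*t/3 + t^2/3 := by
  set G : ℝ → ℝ := fun t => 4/3 + 2*t/3 - (4/3 - 2*t/3) * Real.exp t with hG
  set F : ℝ → ℝ := fun t => 2 + 4*t/3 + t^2/3 - (2 - 2*t/3) * Real.exp t with hF
  have hGmono : Monotone G := by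
    apply monotone_of_deriv_nonneg
    · exact fun x => (hasDerivAt_G x).differentiableAt
    · intro x
      rw [(hasDerivAt_G x).deriv]
      exact aux_deriv_nonneg x
  have hG0 : G 0 = 0 := by simp [hG]
  have hF0 : F 0 = 0 := by simp [hF]
  have key : 0 ≤ F t := by
    rcases le_total 0 t with ht | ht
    · have hmono : MonotoneOn F (Set.Ici (0:ℝ)) := by
        apply monotoneOn_of_deriv_nonneg (convex_Ici 0)
        · exact (Continuous.continuousOn (by fun_prop))
        · intro x hx
          exact (hasDerivAt_F x).differentiableAt.differentiableWithinAt
        · intro x hx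
          rw [(hasDerivAt_F x).deriv]
          have : G 0 ≤ G x := hGmono (le_of_lt (by simpa using hx))
          rw [hG0] at this
          simpa [hG] using this
      have := hmono (Set.self_mem_Ici) (Set.mem_Ici.2 ht) ht
      rwa [hF0] at this
    · have hanti : AntitoneOn F (Set.Iic (0:ℝ)) := by
        apply antitoneOn_of_deriv_nonpos (convex_Iic 0)
        · exact (Continuous.continuousOn (by fun_prop))
        · intro x hx
          exact (hasDerivAt_F x).differentiableAt.differentiableWithinAt
        · intro x hx
          rw [(hasDerivAt_F x).deriv]
          have : G x ≤ G 0 := hGmono (le_of_lt (by simpa using hx))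
          rw [hG0] at this
          simpa [hG] using this
      have := hanti (Set.mem_Iic.2 ht) (Set.self_mem_Iic) ht
      rwa [hF0] at this
  have key' : 0 ≤ 2 + 4*t/3 + t^2/3 - (2 - 2*t/3) * Real.exp t := by simpa [hF] using key
  linarith

private lemma aux_exp_bound {t : ℝ} (ht : t < 3) :
    Real.exp t ≤ 1 + t + t^2/(2*(1 - t/3)) := by
  have hD : 0 < 2 - 2*t/3 := by linarith
  have h : (1 + t + t^2/(2*(1 - t/3))) * (2 - 2*t/3) = 2 + 4*t/3 + t^2/3 := by
    rw [show 2*(1 - t/3) = 2 - 2*t/3 from by ring, add_mul, add_mul,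
      div_mul_cancel₀ _ hD.ne']
    ring
  rw [← mul_le_mul_iff_left₀ hD, h]
  nlinarith [aux_exp_key t]

private lemma bernstein_mgf {Ω : Type*} [MeasurableSpace Ω] (μ : Measure Ω)
    [IsProbabilityMeasure μ] (Y : Ω → ℝ) (hm : Measurable Y)
    (K v lam : ℝ) (hb : ∀ᵐ ω ∂μ, |Y ω| ≤ K)
    (hlam : 0 ≤ lam) (hlamK : lam * K < 3)
    (hv : ∫ ω, (Y ω)^2 ∂μ ≤ v) :
    mgf Y μ lam ≤ Real.exp (lam * (∫ ω, Y ω ∂μ) + lam^2 * v / (2*(1 - lam*K/3))) := by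
  set D : ℝ := 2*(1 - lam*K/3) with hDdef
  have hD : 0 < D := by rw [hDdef]; linarith
  have hYint : Integrable Y μ :=
    (integrable_const K).mono' hm.aestronglyMeasurable
      (by filter_upwards [hb] with ω hω; simpa [Real.norm_eq_abs] using hω)
  have hY2int : Integrable (fun ω => (Y ω)^2) μ :=
    (integrable_const (K^2)).mono' (hm.pow_const 2).aestronglyMeasurable
      (by filter_upwards [hb] with ω hω
          rw [Real.norm_eq_abs, abs_pow]
          exact pow_le_pow_left₀ (abs_nonneg _) hω 2)
  have hexpint : Integrable (fun ω => Real.exp (lam * Y ω)) μ :=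
    (integrable_const (Real.exp (lam * K))).mono'
      (hm.const_mul lam).exp.aestronglyMeasurable
      (by filter_upwards [hb] with ω hω
          rw [Real.norm_eq_abs, abs_of_pos (Real.exp_pos _), Real.exp_le_exp]
          exact mul_le_mul_of_nonneg_left (le_trans (le_abs_self _) hω) hlam)
  have hpt : ∀ᵐ ω ∂μ, Real.exp (lam * Y ω) ≤ 1 + lam * Y ω + lam^2 * (Y ω)^2 / D := by
    filter_upwards [hb] with ω hω
    have ht3 : lam * Y ω ≤ lam * K :=
      mul_le_mul_of_nonneg_left (le_trans (le_abs_self _) hω) hlam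
    have h1 := aux_exp_bound (lt_of_le_of_lt ht3 hlamK)
    have h2 : (lam * Y ω)^2 / (2*(1 - lam * Y ω/3)) ≤ (lam * Y ω)^2 / D := by
      apply div_le_div_of_nonneg_left (sq_nonneg _) hD
      rw [hDdef]; linarith
    calc Real.exp (lam * Y ω) ≤ 1 + lam * Y ω + (lam * Y ω)^2/(2*(1 - lam * Y ω/3)) := h1
      _ ≤ 1 + lam * Y ω + (lam * Y ω)^2 / D := by linarith
      _ = 1 + lam * Y ω + lam^2 * (Y ω)^2 / D := by ring
  have hA : Integrable (fun ω => 1 + lam * Y ω) μ := by exact (integrable_const 1).add (hYint.const_mul lam)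
  have hB : Integrable (fun ω => lam^2 * (Y ω)^2 / D) μ := (hY2int.const_mul (lam^2)).div_const D
  have hgint : Integrable (fun ω => 1 + lam * Y ω + lam^2 * (Y ω)^2 / D) μ := by exact hA.add hB
  have step1 : mgf Y μ lam ≤ ∫ ω, (1 + lam * Y ω + lam^2 * (Y ω)^2 / D) ∂μ :=
    integral_mono_ae hexpint hgint hpt
  have step2 : ∫ ω, (1 + lam * Y ω + lam^2 * (Y ω)^2 / D) ∂μ
      = 1 + lam * (∫ ω, Y ω ∂μ) + lam^2 * (∫ ω, (Y ω)^2 ∂μ) / D := by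
    rw [integral_add hA hB, integral_add (integrable_const 1) (hYint.const_mul lam),
      integral_const, integral_div, integral_const_mul, integral_const_mul]
    simp
  have step3 : 1 + lam * (∫ ω, Y ω ∂μ) + lam^2 * (∫ ω, (Y ω)^2 ∂μ) / D
      ≤ 1 + lam * (∫ ω, Y ω ∂μ) + lam^2 * v / D := by
    gcongr
  have step4 := Real.add_one_le_exp (lam * (∫ ω, Y ω ∂μ) + lam^2 * v / D)
  calc mgf Y μ lam ≤ 1 + lam * (∫ ω, Y ω ∂μ) + lam^2 * (∫ ω, (Y ω)^2 ∂μ) / D := by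
        rw [← step2]; exact step1
    _ ≤ 1 + lam * (∫ ω, Y ω ∂μ) + lam^2 * v / D := step3
    _ ≤ Real.exp (lam * (∫ ω, Y ω ∂μ) + lam^2 * v / D) := by linarith

private lemma bernstein_tail {Ω : Type*} [MeasurableSpace Ω] (μ : Measure Ω)
    [IsProbabilityMeasure μ] {n : ℕ} (hn : 0 < n) (Y : Fin n → Ω → ℝ)
    (hmeas : ∀ i, Measurable (Y i))
    (hindep : iIndepFun Y μ)
    (K v m x : ℝ) (hb : ∀ i, ∀ᵐ ω ∂μ, |Y i ω| ≤ K)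
    (hm : ∀ i, ∫ ω, Y i ω ∂μ = m) (hv : ∀ i, ∫ ω, (Y i ω)^2 ∂μ ≤ v)
    (hv0 : 0 < v) (hx : 0 < x) (hK : 0 ≤ K) :
    (μ {ω | (n:ℝ)*m + Real.sqrt (2*n*v*x) + K*x/3 ≤ ∑ i, Y i ω}).toReal
      ≤ Real.exp (-x) := by
  have hn' : (0:ℝ) < n := Nat.cast_pos.2 hn
  set V : ℝ := (n:ℝ)*v with hVdef
  have hV : 0 < V := mul_pos hn' hv0
  set s : ℝ := Real.sqrt (2*V*x) with hsdef
  have hs0 : 0 < s := Real.sqrt_pos.2 (by positivity)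
  have hs2 : s^2 = 2*V*x := Real.sq_sqrt (by positivity)
  set c : ℝ := K/3 with hcdef
  have hc : 0 ≤ c := by rw [hcdef]; linarith
  have hden : 0 < V + c*s := by positivity
  set lam : ℝ := s/(V + c*s) with hlamdef
  have hlam0 : 0 ≤ lam := by positivity
  have hlamK : lam * K < 3 := by
    rw [hlamdef, div_mul_eq_mul_div, div_lt_iff₀ hden]
    nlinarith
  have hmgf_i : ∀ i : Fin n, mgf (Y i) μ lam
      ≤ Real.exp (lam*m + lam^2*v/(2*(1 - lam*K/3))) := by
    intro i
    have := bernstein_mgf μ (Y i) (hmeas i) K v lam (hb i) hlam0 hlamK (hv i)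
    rwa [hm i] at this
  -- integrability of exp of the sum
  have hsumint : Integrable (fun ω => Real.exp (lam * (∑ i, Y i ω))) μ := by
    apply (integrable_const (Real.exp (lam * (n*K)))).mono'
    · exact (Finset.measurable_sum _ (fun i _ => hmeas i)).const_mul lam
        |>.exp.aestronglyMeasurable
    · filter_upwards [ae_all_iff.2 hb] with ω hω
      rw [Real.norm_eq_abs, abs_of_pos (Real.exp_pos _), Real.exp_le_exp]
      apply mul_le_mul_of_nonneg_left _ hlam0
      calc ∑ i, Y i ω ≤ ∑ i : Fin n, K :=
            Finset.sum_le_sum (fun i _ => le_trans (le_abs_self _) (hω i))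
        _ = n*K := by simp [mul_comm]
  have chernoff := measure_ge_le_exp_mul_mgf (μ := μ)
    (X := fun ω => ∑ i, Y i ω) ((n:ℝ)*m + s + c*x) hlam0 hsumint
  have hmgf_eq : mgf (fun ω => ∑ i, Y i ω) μ lam = ∏ i, mgf (Y i) μ lam := by
    rw [show (fun ω => ∑ i, Y i ω) = ∑ i, Y i from by funext ω; simp]
    exact hindep.mgf_sum hmeas Finset.univ
  have hprod : ∏ i, mgf (Y i) μ lam
      ≤ Real.exp ((n:ℝ)*(lam*m + lam^2*v/(2*(1 - lam*K/3)))) := by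
    calc ∏ i, mgf (Y i) μ lam
        ≤ ∏ _i : Fin n, Real.exp (lam*m + lam^2*v/(2*(1 - lam*K/3))) :=
          Finset.prod_le_prod (fun i _ => mgf_nonneg) (fun i _ => hmgf_i i)
      _ = Real.exp (lam*m + lam^2*v/(2*(1 - lam*K/3))) ^ n := by
          rw [Finset.prod_const, Finset.card_univ, Fintype.card_fin]
      _ = Real.exp ((n:ℝ)*(lam*m + lam^2*v/(2*(1 - lam*K/3)))) := by
          rw [← Real.exp_nat_mul]
  have hfrac : (1:ℝ) - lam*K/3 = V/(V+c*s) := by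
    rw [hlamdef, hcdef]
    field_simp
    ring
  have key : -lam*((n:ℝ)*m + s + c*x)
      + (n:ℝ)*(lam*m + lam^2*v/(2*(1 - lam*K/3))) = -x := by
    rw [hfrac, hlamdef]
    field_simp
    linear_combination (-V) * hs2 - s^2 * hVdef
  calc (μ {ω | (n:ℝ)*m + Real.sqrt (2*n*v*x) + K*x/3 ≤ ∑ i, Y i ω}).toReal
      = (μ {ω | (n:ℝ)*m + s + c*x ≤ ∑ i, Y i ω}).toReal := by
        congr 2
        rw [hsdef, hcdef, hVdef]
        norm_num
        ring_nf
    _ ≤ Real.exp (-lam * ((n:ℝ)*m + s + c*x)) * mgf (fun ω => ∑ i, Y i ω) μ lam := chernoff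
    _ ≤ Real.exp (-lam * ((n:ℝ)*m + s + c*x))
          * Real.exp ((n:ℝ)*(lam*m + lam^2*v/(2*(1 - lam*K/3)))) := by
        rw [hmgf_eq]
        exact mul_le_mul_of_nonneg_left hprod (le_of_lt (Real.exp_pos _))
    _ = Real.exp (-lam*((n:ℝ)*m + s + c*x)
          + (n:ℝ)*(lam*m + lam^2*v/(2*(1 - lam*K/3)))) := by rw [← Real.exp_add]
    _ = Real.exp (-x) := by rw [key]

/-- Exponential concentration of the truncated likelihood-ratio estimator with the
simple truncation boundary `τₙ = (n·I_α(P‖Q)/ln(2/δ))^{1/α}`. -/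
theorem truncated_lr_exponential_concentration_inftyNorm
    {X : Type*} [MeasurableSpace X] {Ω : Type*} [MeasurableSpace Ω]
    (P Q : Measure X) [IsProbabilityMeasure P] [IsProbabilityMeasure Q]
    (hPQ : P ≪ Q) (h : X → ℝ) (hmeas : Measurable h)
    (hinf : eLpNorm h ⊤ Q < ⊤)
    (α : ℝ) (hα1 : 1 < α) (hα2 : α ≤ 2)
    (hI : Integrable (fun x => lr P Q x ^ α) Q)
    (μ : Measure Ω) [IsProbabilityMeasure μ]
    (n : ℕ) (hn : 0 < n) (Xs : Fin n → Ω → X)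
    (hXmeas : ∀ i, Measurable (Xs i))
    (hid : ∀ i, Measure.map (Xs i) μ = Q)
    (hindep : iIndepFun Xs μ)
    (δ : ℝ) (hδ0 : 0 < δ) (hδ1 : δ < 1)
    (τ : ℝ) (hτdef : τ = ((n : ℝ) * Ialpha P Q α / Real.log (2 / δ)) ^ (1 / α)) :
    ENNReal.ofReal (1 - δ) ≤
      μ {ω | |(1 / (n : ℝ)) * ∑ i, h (Xs i ω) * min (lr P Q (Xs i ω)) τ - ∫ x, h x ∂P| ≤
        (eLpNorm h ⊤ Q).toReal * (Real.sqrt 2 + 4 / 3) *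
          (Real.log (2 / δ) / n) ^ (1 - 1 / α) * Ialpha P Q α ^ (1 / α)} := by
  classical
  have hn' : (0:ℝ) < n := Nat.cast_pos.2 hn
  have hα0 : (0:ℝ) < α := by linarith
  have hlmeas : Measurable (lr P Q) := (Measure.measurable_rnDeriv P Q).ennreal_toReal
  have hlnn : ∀ x, 0 ≤ lr P Q x := fun x => ENNReal.toReal_nonneg
  set L : ℝ := Real.log (2/δ) with hLdef
  have hL : 0 < L := Real.log_pos (by rw [lt_div_iff₀ hδ0]; linarith)
  set I : ℝ := Ialpha P Q α with hIdef
  have hlint : Integrable (lr P Q) Q := Measure.integrable_toReal_rnDeriv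
  have hlint1 : ∫ x, lr P Q x ∂Q = 1 := by
    rw [show (fun x => lr P Q x) = fun x => (P.rnDeriv Q x).toReal from rfl]
    rw [Measure.integral_toReal_rnDeriv hPQ]
    simp
  have hInn : 0 ≤ I := integral_nonneg (fun x => Real.rpow_nonneg (hlnn x) α)
  have hIpos : 0 < I := by
    rcases hInn.lt_or_eq with h' | h'
    · exact h'
    exfalso
    have h0 : ∫ x, lr P Q x ^ α ∂Q = 0 := h'.symm
    have hae0 : (fun x => lr P Q x ^ α) =ᵐ[Q] 0 :=
      (integral_eq_zero_iff_of_nonneg (fun x => Real.rpow_nonneg (hlnn x) α) hI).1 h0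
    have hl0 : (fun x => lr P Q x) =ᵐ[Q] 0 := by
      filter_upwards [hae0] with x hx
      simp only [Pi.zero_apply] at hx ⊢
      by_contra hc
      have hpos : 0 < lr P Q x := (hlnn x).lt_of_ne (Ne.symm hc)
      exact absurd hx (ne_of_gt (Real.rpow_pos_of_pos hpos α))
    rw [integral_congr_ae hl0] at hlint1
    simp at hlint1
  set Kh : ℝ := (eLpNorm h ⊤ Q).toReal with hKhdef
  have hKh0 : 0 ≤ Kh := ENNReal.toReal_nonneg
  have haeh : ∀ᵐ x ∂Q, |h x| ≤ Kh := by
    filter_upwards [ae_le_eLpNormEssSup (f := h) (μ := Q)] with x hx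
    have hx' : (‖h x‖₊ : ENNReal) ≤ eLpNorm h ⊤ Q := by rwa [eLpNorm_exponent_top]
    have := ENNReal.toReal_mono hinf.ne hx'
    simpa [Real.norm_eq_abs, hKhdef] using this
  -- tau facts
  have hbase : 0 < (n:ℝ) * I / L := by positivity
  have hτpos : 0 < τ := by rw [hτdef]; exact Real.rpow_pos_of_pos hbase _
  have hτα : τ ^ α = (n:ℝ) * I / L := by
    rw [hτdef, ← Real.rpow_mul hbase.le, one_div_mul_cancel hα0.ne', Real.rpow_one]
  have hτI : τ ^ ((1:ℝ)-α) * I = τ * L / (n:ℝ) := by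
    rw [Real.rpow_sub hτpos, Real.rpow_one, hτα]
    field_simp
  have hτ2I : τ ^ ((2:ℝ)-α) * I = τ^2 * L / (n:ℝ) := by
    rw [Real.rpow_sub hτpos, hτα, show ((2:ℝ)) = ((2:ℕ):ℝ) from by norm_num,
      Real.rpow_natCast]
    field_simp
  -- the truncated integrand
  set g : X → ℝ := fun x => h x * min (lr P Q x) τ with hgdef
  have hgmeas : Measurable g := hmeas.mul (hlmeas.min measurable_const)
  have hminmem : ∀ x, 0 ≤ min (lr P Q x) τ ∧ min (lr P Q x) τ ≤ τ :=
    fun x => ⟨le_min (hlnn x) hτpos.le, min_le_right _ _⟩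
  have haegQ : ∀ᵐ x ∂Q, |g x| ≤ Kh * τ := by
    filter_upwards [haeh] with x hx
    rw [hgdef]
    simp only [abs_mul]
    apply mul_le_mul hx _ (abs_nonneg _) hKh0
    rw [abs_of_nonneg (hminmem x).1]
    exact (hminmem x).2
  set m : ℝ := ∫ x, g x ∂Q with hmdef
  have hmean : ∀ i, ∫ ω, g (Xs i ω) ∂μ = m := by
    intro i
    rw [hmdef, ← hid i]
    exact (integral_map (hXmeas i).aemeasurable
      (by rw [hid i]; exact hgmeas.aestronglyMeasurable)).symm
  have haeμ : ∀ i, ∀ᵐ ω ∂μ, |g (Xs i ω)| ≤ Kh * τ := by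
    intro i
    have hset : MeasurableSet {x | |g x| ≤ Kh * τ} :=
      measurableSet_le hgmeas.abs measurable_const
    have : ∀ᵐ x ∂(Measure.map (Xs i) μ), |g x| ≤ Kh * τ := by rw [hid i]; exact haegQ
    exact (ae_map_iff (hXmeas i).aemeasurable hset).1 this
  -- second moment bound over Q
  have hgsqQ : ∀ᵐ x ∂Q, (g x)^2 ≤ Kh^2 * τ^((2:ℝ)-α) * (lr P Q x ^ α) := by
    filter_upwards [haeh] with x hx
    have hmin2 : (min (lr P Q x) τ)^2 ≤ τ^((2:ℝ)-α) * lr P Q x ^ α := by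
      rcases le_total (lr P Q x) τ with hle | hle
      · rw [min_eq_left hle]
        rcases (hlnn x).lt_or_eq with hpos | h0
        · have e1 : lr P Q x ^ 2 = lr P Q x ^ ((2:ℝ)-α) * lr P Q x ^ α := by
            rw [← Real.rpow_add hpos, sub_add_cancel,
              show ((2:ℝ)) = ((2:ℕ):ℝ) from by norm_num, Real.rpow_natCast]
          rw [e1]
          apply mul_le_mul_of_nonneg_right _ (Real.rpow_nonneg (hlnn x) α)
          exact Real.rpow_le_rpow (hlnn x) hle (by linarith)
        · rw [← h0]
          simp [Real.zero_rpow (by linarith : α ≠ 0)]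
      · rw [min_eq_right hle]
        have e1 : τ ^ 2 = τ ^ ((2:ℝ)-α) * τ ^ α := by
          rw [← Real.rpow_add hτpos, sub_add_cancel,
            show ((2:ℝ)) = ((2:ℕ):ℝ) from by norm_num, Real.rpow_natCast]
        rw [e1]
        exact mul_le_mul_of_nonneg_left (Real.rpow_le_rpow hτpos.le hle hα0.le)
          (Real.rpow_nonneg hτpos.le _)
    have hh2 : (h x)^2 ≤ Kh^2 := by
      rw [← sq_abs]
      exact pow_le_pow_left₀ (abs_nonneg _) hx 2
    calc (g x)^2 = (h x)^2 * (min (lr P Q x) τ)^2 := by rw [hgdef]; ring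
      _ ≤ Kh^2 * (τ^((2:ℝ)-α) * lr P Q x ^ α) := by
          apply mul_le_mul hh2 hmin2 (sq_nonneg _) (by positivity)
      _ = Kh^2 * τ^((2:ℝ)-α) * (lr P Q x ^ α) := by ring
  have hgintQ : Integrable g Q :=
    (integrable_const (Kh*τ)).mono' hgmeas.aestronglyMeasurable
      (by filter_upwards [haegQ] with x hx; simpa [Real.norm_eq_abs] using hx)
  have hgsqintQ : Integrable (fun x => (g x)^2) Q :=
    (integrable_const ((Kh*τ)^2)).mono' (hgmeas.pow_const 2).aestronglyMeasurable
      (by filter_upwards [haegQ] with x hx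
          rw [Real.norm_eq_abs, abs_pow]
          exact pow_le_pow_left₀ (abs_nonneg _) hx 2)
  have hv2Q : ∫ x, (g x)^2 ∂Q ≤ Kh^2 * τ^2 * L / (n:ℝ) := by
    calc ∫ x, (g x)^2 ∂Q ≤ ∫ x, Kh^2 * τ^((2:ℝ)-α) * (lr P Q x ^ α) ∂Q :=
          integral_mono_ae hgsqintQ (hI.const_mul _) hgsqQ
      _ = Kh^2 * (τ^((2:ℝ)-α) * I) := by
          rw [integral_const_mul, hIdef]
          simp only [Ialpha]
          ring
      _ = Kh^2 * τ^2 * L / (n:ℝ) := by rw [hτ2I]; ring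
  -- expectation under P
  have hEP : ∫ x, h x ∂P = ∫ x, h x * lr P Q x ∂Q := by
    rw [← integral_rnDeriv_smul hPQ (f := h)]
    apply integral_congr_ae
    filter_upwards with x
    simp [lr, mul_comm]
  have hhlint : Integrable (fun x => h x * lr P Q x) Q := by
    apply (hlint.const_mul Kh).mono' (hmeas.mul hlmeas).aestronglyMeasurable
    filter_upwards [haeh] with x hx
    rw [Real.norm_eq_abs, Pi.mul_apply, abs_mul, abs_of_nonneg (hlnn x)]
    exact mul_le_mul_of_nonneg_right hx (hlnn x)
  -- bias bound
  have hbias : |m - ∫ x, h x ∂P| ≤ Kh * (τ * L / (n:ℝ)) := by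
    rw [hEP, hmdef, ← integral_sub hgintQ hhlint]
    have hptw : ∀ᵐ x ∂Q, |g x - h x * lr P Q x| ≤ Kh * τ^((1:ℝ)-α) * (lr P Q x ^ α) := by
      filter_upwards [haeh] with x hx
      have hkey : lr P Q x - min (lr P Q x) τ ≤ τ^((1:ℝ)-α) * lr P Q x ^ α := by
        rcases le_total (lr P Q x) τ with hle | hle
        · rw [min_eq_left hle]
          simp only [sub_self]
          exact mul_nonneg (Real.rpow_nonneg hτpos.le _) (Real.rpow_nonneg (hlnn x) _)
        · rw [min_eq_right hle]
          have hlpos : 0 < lr P Q x := lt_of_lt_of_le hτpos hle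
          have e1 : lr P Q x = lr P Q x ^ ((1:ℝ)-α) * lr P Q x ^ α := by
            rw [← Real.rpow_add hlpos, sub_add_cancel, Real.rpow_one]
          calc lr P Q x - τ ≤ lr P Q x := by linarith
            _ = lr P Q x ^ ((1:ℝ)-α) * lr P Q x ^ α := e1
            _ ≤ τ^((1:ℝ)-α) * lr P Q x ^ α := by
                apply mul_le_mul_of_nonneg_right _ (Real.rpow_nonneg (hlnn x) α)
                exact Real.rpow_le_rpow_of_nonpos hτpos hle (by linarith)
      have habs : |g x - h x * lr P Q x| = |h x| * (lr P Q x - min (lr P Q x) τ) := by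
        rw [hgdef]
        rw [show h x * min (lr P Q x) τ - h x * lr P Q x
            = -(h x * (lr P Q x - min (lr P Q x) τ)) from by ring, abs_neg, abs_mul,
          abs_of_nonneg (by linarith [(hminmem x).1, min_le_left (lr P Q x) τ] :
            0 ≤ lr P Q x - min (lr P Q x) τ)]
      rw [habs]
      calc |h x| * (lr P Q x - min (lr P Q x) τ)
          ≤ Kh * (τ^((1:ℝ)-α) * lr P Q x ^ α) := by
            apply mul_le_mul hx hkey (by linarith [min_le_left (lr P Q x) τ]) hKh0
        _ = Kh * τ^((1:ℝ)-α) * (lr P Q x ^ α) := by ring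
    calc |∫ x, (g x - h x * lr P Q x) ∂Q| ≤ ∫ x, |g x - h x * lr P Q x| ∂Q :=
          by rw [← Real.norm_eq_abs]
             exact (norm_integral_le_integral_norm _).trans_eq
               (by simp [Real.norm_eq_abs])
      _ ≤ ∫ x, Kh * τ^((1:ℝ)-α) * (lr P Q x ^ α) ∂Q := by
          apply integral_mono_ae (hgintQ.sub hhlint).abs (hI.const_mul _) hptw
      _ = Kh * (τ^((1:ℝ)-α) * I) := by
          rw [integral_const_mul, hIdef]
          simp only [Ialpha]
          ring
      _ = Kh * (τ * L / (n:ℝ)) := by rw [hτI]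
  set EPh : ℝ := ∫ x, h x ∂P with hEPhdef
  set R : ℝ := Kh * (Real.sqrt 2 + 4 / 3) * (L / n) ^ ((1:ℝ) - 1/α) * I ^ ((1:ℝ)/α) with hRdef
  have hgoal : (μ {ω | |(1 / (n : ℝ)) * ∑ i, h (Xs i ω) * min (lr P Q (Xs i ω)) τ - EPh| ≤ R})
      = μ {ω | |(1/(n:ℝ)) * ∑ i, g (Xs i ω) - EPh| ≤ R} := rfl
  have hSmeas : MeasurableSet {ω | |(1/(n:ℝ)) * ∑ i, g (Xs i ω) - EPh| ≤ R} := by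
    apply measurableSet_le _ measurable_const
    exact (((Finset.measurable_sum Finset.univ
      (fun i _ => hgmeas.comp (hXmeas i))).const_mul _).sub measurable_const).abs
  rw [show {ω | |(1 / (n : ℝ)) * ∑ i, h (Xs i ω) * min (lr P Q (Xs i ω)) τ - EPh| ≤ R}
      = {ω | |(1/(n:ℝ)) * ∑ i, g (Xs i ω) - EPh| ≤ R} from rfl]
  by_cases hKhz : Kh = 0
  · -- degenerate case : h vanishes Q-a.e.
    have hh0Q : h =ᵐ[Q] 0 := by
      filter_upwards [haeh] with x hx
      rw [hKhz] at hx
      simpa using abs_nonpos_iff.1 hx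
    have hEPh0 : EPh = 0 := by
      rw [hEPhdef]
      exact integral_eq_zero_of_ae (hPQ.ae_le hh0Q)
    have hae_univ : ∀ᵐ ω ∂μ, |(1/(n:ℝ)) * ∑ i, g (Xs i ω) - EPh| ≤ R := by
      filter_upwards [ae_all_iff.2 haeμ] with ω hω
      have hz : ∀ i : Fin n, g (Xs i ω) = 0 := by
        intro i
        have := hω i
        rw [hKhz, zero_mul] at this
        simpa using abs_nonpos_iff.1 this
      have hsum : ∑ i, g (Xs i ω) = 0 := Finset.sum_eq_zero (fun i _ => hz i)
      rw [hsum, hEPh0, hRdef, hKhz]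
      simp
    calc ENNReal.ofReal (1 - δ) ≤ 1 := ENNReal.ofReal_le_one.2 (by linarith)
      _ = μ Set.univ := measure_univ.symm
      _ ≤ μ {ω | |(1/(n:ℝ)) * ∑ i, g (Xs i ω) - EPh| ≤ R} :=
          measure_mono_ae (hae_univ.mono fun ω hω _ => hω)
  · have hKhpos : 0 < Kh := hKh0.lt_of_ne (Ne.symm hKhz)
    set K : ℝ := Kh * τ with hKdef
    set v' : ℝ := Kh^2 * τ^2 * L / (n:ℝ) with hv'def
    have hv'pos : 0 < v' := by rw [hv'def]; positivity
    have hYmeas : ∀ i : Fin n, Measurable (fun ω => g (Xs i ω)) :=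
      fun i => hgmeas.comp (hXmeas i)
    have hYindep : iIndepFun (fun i (ω : Ω) => g (Xs i ω)) μ :=
      hindep.comp (fun _ => g) (fun _ => hgmeas)
    have hv2 : ∀ i, ∫ ω, (g (Xs i ω))^2 ∂μ ≤ v' := by
      intro i
      have heq : ∫ ω, (g (Xs i ω))^2 ∂μ = ∫ x, (g x)^2 ∂Q := by
        rw [← hid i]
        exact (integral_map (hXmeas i).aemeasurable
          (by rw [hid i]; exact (hgmeas.pow_const 2).aestronglyMeasurable)).symm
      rw [heq, hv'def]
      exact hv2Q
    have up := bernstein_tail μ hn (fun i ω => g (Xs i ω)) hYmeas hYindep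
      K v' m L haeμ hmean hv2 hv'pos hL (by positivity)
    have hnegmeas : ∀ i : Fin n, Measurable (fun ω => -(g (Xs i ω))) :=
      fun i => (hYmeas i).neg
    have hnegindep : iIndepFun (fun i (ω : Ω) => -(g (Xs i ω))) μ :=
      hindep.comp (fun _ => fun x => -(g x)) (fun _ => hgmeas.neg)
    have hmeanneg : ∀ i, ∫ ω, -(g (Xs i ω)) ∂μ = -m := by
      intro i
      rw [integral_neg, hmean i]
    have hvneg : ∀ i, ∫ ω, (-(g (Xs i ω)))^2 ∂μ ≤ v' := by
      intro i
      simpa only [neg_sq] using hv2 i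
    have hbneg : ∀ i, ∀ᵐ ω ∂μ, |(-(g (Xs i ω)))| ≤ K := by
      intro i
      filter_upwards [haeμ i] with ω hω
      rwa [abs_neg]
    have low := bernstein_tail μ hn (fun i ω => -(g (Xs i ω))) hnegmeas hnegindep
      K v' (-m) L hbneg hmeanneg hvneg hv'pos hL (by positivity)
    -- convert exp(-L) to δ/2
    have hexpL : Real.exp (-L) = δ/2 := by
      rw [hLdef, Real.exp_neg, Real.exp_log (by positivity), inv_div]
    have hAbound : μ {ω | (n:ℝ)*m + Real.sqrt (2*n*v'*L) + K*L/3 ≤ ∑ i, g (Xs i ω)}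
        ≤ ENNReal.ofReal (δ/2) := by
      rw [ENNReal.le_ofReal_iff_toReal_le (measure_ne_top μ _) (by positivity)]
      exact le_of_le_of_eq up hexpL
    have hBbound : μ {ω | (n:ℝ)*(-m) + Real.sqrt (2*n*v'*L) + K*L/3 ≤ ∑ i, -(g (Xs i ω))}
        ≤ ENNReal.ofReal (δ/2) := by
      rw [ENNReal.le_ofReal_iff_toReal_le (measure_ne_top μ _) (by positivity)]
      exact le_of_le_of_eq low hexpL
    -- arithmetic identities
    have hsqrt : Real.sqrt (2*(n:ℝ)*v'*L) = Real.sqrt 2 * (Kh*τ*L) := by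
      rw [hv'def, show 2*(n:ℝ)*(Kh^2*τ^2*L/(n:ℝ))*L = 2*(Kh*τ*L)^2 from by
        field_simp, Real.sqrt_mul (by norm_num : (0:ℝ) ≤ 2),
        Real.sqrt_sq (by positivity)]
    have hLn : (0:ℝ) < L/(n:ℝ) := by positivity
    have hIτ : I ^ ((1:ℝ)/α) = (L/(n:ℝ)) ^ ((1:ℝ)/α) * τ := by
      rw [hτdef, ← Real.mul_rpow hLn.le hbase.le]
      congr 1
      field_simp
    have hpow1 : (L/(n:ℝ)) ^ ((1:ℝ) - 1/α) * I ^ ((1:ℝ)/α) = τ * (L/(n:ℝ)) := by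
      rw [hIτ, ← mul_assoc, ← Real.rpow_add hLn, sub_add_cancel, Real.rpow_one]
      ring
    have hRval : R = Kh * (Real.sqrt 2 + 4/3) * (τ * L / (n:ℝ)) := by
      rw [hRdef, mul_assoc (Kh * (Real.sqrt 2 + 4/3)), hpow1]
      ring
    have hnR : (n:ℝ) * R = Real.sqrt (2*(n:ℝ)*v'*L) + K*L/3 + (n:ℝ)*(Kh*(τ*L/(n:ℝ))) := by
      rw [hRval, hsqrt, hKdef]
      field_simp
      ring
    -- event inclusion
    have hsub : {ω | |(1/(n:ℝ)) * ∑ i, g (Xs i ω) - EPh| ≤ R}ᶜ ⊆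
        {ω | (n:ℝ)*m + Real.sqrt (2*n*v'*L) + K*L/3 ≤ ∑ i, g (Xs i ω)} ∪
        {ω | (n:ℝ)*(-m) + Real.sqrt (2*n*v'*L) + K*L/3 ≤ ∑ i, -(g (Xs i ω))} := by
      intro ω hω
      simp only [Set.mem_compl_iff, Set.mem_setOf_eq, not_le] at hω
      simp only [Set.mem_union, Set.mem_setOf_eq]
      set Sn : ℝ := ∑ i, g (Xs i ω) with hSndef
      have h1 : (n:ℝ) * R < |Sn - (n:ℝ)*EPh| := by
        have he : (n:ℝ) * |1/(n:ℝ) * Sn - EPh| = |Sn - (n:ℝ)*EPh| := by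
          rw [← abs_of_pos hn', ← abs_mul]
          congr 1
          field_simp
          rw [abs_of_pos hn']
        calc (n:ℝ) * R < (n:ℝ) * |1/(n:ℝ) * Sn - EPh| :=
              mul_lt_mul_of_pos_left hω hn'
          _ = |Sn - (n:ℝ)*EPh| := he
      have hb' : |Sn - (n:ℝ)*EPh| - |Sn - (n:ℝ)*m| ≤ (n:ℝ)*(Kh*(τ*L/(n:ℝ))) := by
        calc |Sn - (n:ℝ)*EPh| - |Sn - (n:ℝ)*m|
            ≤ |(Sn - (n:ℝ)*EPh) - (Sn - (n:ℝ)*m)| := abs_sub_abs_le_abs_sub _ _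
          _ = (n:ℝ) * |m - EPh| := by
              rw [show (Sn - (n:ℝ)*EPh) - (Sn - (n:ℝ)*m) = (n:ℝ)*(m - EPh) from by ring,
                abs_mul, abs_of_pos hn']
          _ ≤ (n:ℝ)*(Kh*(τ*L/(n:ℝ))) := mul_le_mul_of_nonneg_left hbias hn'.le
      have hd : Real.sqrt (2*(n:ℝ)*v'*L) + K*L/3 < |Sn - (n:ℝ)*m| := by
        have := hnR
        linarith
      rcases lt_abs.1 hd with hcase | hcase
      · left
        linarith
      · right
        rw [Finset.sum_neg_distrib]
        linarith
    -- assemble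
    have hcompl : μ ({ω | |(1/(n:ℝ)) * ∑ i, g (Xs i ω) - EPh| ≤ R}ᶜ)
        ≤ ENNReal.ofReal δ := by
      calc μ ({ω | |(1/(n:ℝ)) * ∑ i, g (Xs i ω) - EPh| ≤ R}ᶜ)
          ≤ μ ({ω | (n:ℝ)*m + Real.sqrt (2*n*v'*L) + K*L/3 ≤ ∑ i, g (Xs i ω)} ∪
              {ω | (n:ℝ)*(-m) + Real.sqrt (2*n*v'*L) + K*L/3 ≤ ∑ i, -(g (Xs i ω))}) :=
            measure_mono hsub
        _ ≤ μ {ω | (n:ℝ)*m + Real.sqrt (2*n*v'*L) + K*L/3 ≤ ∑ i, g (Xs i ω)} +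
            μ {ω | (n:ℝ)*(-m) + Real.sqrt (2*n*v'*L) + K*L/3 ≤ ∑ i, -(g (Xs i ω))} :=
            measure_union_le _ _
        _ ≤ ENNReal.ofReal (δ/2) + ENNReal.ofReal (δ/2) := add_le_add hAbound hBbound
        _ = ENNReal.ofReal δ := by
            rw [← ENNReal.ofReal_add (by positivity) (by positivity)]
            norm_num
    refine ENNReal.le_of_add_le_add_right (a := ENNReal.ofReal δ) ENNReal.ofReal_ne_top ?_
    have e1 : ENNReal.ofReal (1-δ) + ENNReal.ofReal δ = 1 := by
      rw [← ENNReal.ofReal_add (by linarith) hδ0.le]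
      norm_num
    rw [e1]
    calc (1:ENNReal) = μ {ω | |(1/(n:ℝ)) * ∑ i, g (Xs i ω) - EPh| ≤ R} +
          μ ({ω | |(1/(n:ℝ)) * ∑ i, g (Xs i ω) - EPh| ≤ R}ᶜ) := by
          rw [measure_add_measure_compl hSmeas, measure_univ]
      _ ≤ μ {ω | |(1/(n:ℝ)) * ∑ i, g (Xs i ω) - EPh| ≤ R} + ENNReal.ofReal δ :=
          add_le_add_right hcompl _
end

section
/- Suppose ‖h‖_{2,P} < ∞ where P ≪ Q, and let τ_n → ∞ with τ_n/n → 0. Then the truncated likelihood ratio estimator h̄_n^{Tru} = (1/n)∑_{i=1}^n h(X̃_i) min(l(X̃_i), τ_n), with X̃_i i.i.d. ∼ Q, is asymptotically unbiased (E[h̄_n^{Tru}] → E_P[h]) and Var(h̄_n^{Tru}) → 0, hence h̄_n^{Tru} → E_P[h] in probability. -/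
open MeasureTheory ProbabilityTheory Filter

/-- The truncated likelihood-ratio estimator based on `n` samples with truncation
boundary `τ`. -/
noncomputable def truLR {X : Type*} [MeasurableSpace X] {Ω : Type*}
    (P Q : Measure X) (h : X → ℝ) (n : ℕ) (Xs : Fin n → Ω → X) (τ : ℝ) (ω : Ω) : ℝ :=
  (1 / (n : ℝ)) * ∑ i, h (Xs i ω) * min (lr P Q (Xs i ω)) τ

/-- Weak consistency of the truncated likelihood-ratio estimator: if `‖h‖_{2,P} < ∞`,
`τₙ → ∞` and `τₙ/n → 0`, then the estimator is asymptotically unbiased, its variance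
tends to `0`, and it converges in probability to `E_P[h]`. -/
theorem truncated_lr_weakly_consistent
    {X : Type*} [MeasurableSpace X] {Ω : Type*} [MeasurableSpace Ω]
    (P Q : Measure X) [IsProbabilityMeasure P] [IsProbabilityMeasure Q]
    (hPQ : P ≪ Q) (h : X → ℝ) (hmeas : Measurable h)
    (hL2 : Integrable (fun x => (h x) ^ 2) P)
    (τ : ℕ → ℝ) (hτ : Tendsto τ atTop atTop)
    (hτn : Tendsto (fun n => τ n / (n : ℝ)) atTop (nhds 0))
    (μ : Measure Ω) [IsProbabilityMeasure μ]
    (Xs : (n : ℕ) → Fin n → Ω → X)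
    (hXmeas : ∀ n i, Measurable (Xs n i))
    (hid : ∀ n i, Measure.map (Xs n i) μ = Q)
    (hindep : ∀ n, iIndepFun (Xs n) μ) :
    Tendsto (fun n => ∫ ω, truLR P Q h n (Xs n) (τ n) ω ∂μ) atTop (nhds (∫ x, h x ∂P)) ∧
    Tendsto (fun n => variance (truLR P Q h n (Xs n) (τ n)) μ) atTop (nhds 0) ∧
    (∀ ε : ℝ, 0 < ε →
      Tendsto (fun n => μ {ω | ε ≤ |truLR P Q h n (Xs n) (τ n) ω - ∫ x, h x ∂P|})
        atTop (nhds 0)) := by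
  classical
  set m : ℝ := ∫ x, h x ∂P with hm
  set g : ℕ → X → ℝ := fun n x => h x * min (lr P Q x) (τ n) with hg
  -- basic measurability and positivity facts
  have hlrmeas : Measurable (lr P Q) := (Measure.measurable_rnDeriv P Q).ennreal_toReal
  have hlr0 : ∀ x, 0 ≤ lr P Q x := fun x => ENNReal.toReal_nonneg
  have hgmeas : ∀ n, Measurable (g n) := fun n =>
    hmeas.mul (hlrmeas.min measurable_const)
  -- L² facts
  have hhL2 : MemLp h 2 P :=
    (memLp_two_iff_integrable_sq hmeas.aestronglyMeasurable).2 (by simpa using hL2)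
  have hInt1 : Integrable h P := hhL2.integrable one_le_two
  -- integrability of the dominating functions under Q
  have hIntB : Integrable (fun x => (P.rnDeriv Q x).toReal • |h x|) Q :=
    (integrable_rnDeriv_smul_iff hPQ).2 hInt1.abs
  have hIntB2 : Integrable (fun x => (P.rnDeriv Q x).toReal • (h x) ^ 2) Q :=
    (integrable_rnDeriv_smul_iff hPQ).2 hL2
  have hB2 : ∫ x, (P.rnDeriv Q x).toReal • (h x) ^ 2 ∂Q = ∫ x, (h x) ^ 2 ∂P :=
    integral_rnDeriv_smul hPQ
  set C : ℝ := ∫ x, (h x) ^ 2 ∂P with hC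
  have hC0 : 0 ≤ C := integral_nonneg fun x => sq_nonneg _
  -- eventual positivity of τ
  obtain ⟨N, hN⟩ : ∃ N, ∀ n ≥ N, 1 ≤ τ n := (hτ.eventually_ge_atTop 1).exists_forall_of_atTop
  -- pointwise bounds for g
  have habs_le : ∀ n, 0 ≤ τ n → ∀ x, ‖g n x‖ ≤ (P.rnDeriv Q x).toReal • |h x| := by
    intro n hτ0 x
    have h1 : |min (lr P Q x) (τ n)| ≤ lr P Q x := by
      rw [abs_of_nonneg (le_min (hlr0 x) hτ0)]
      exact min_le_left _ _
    calc ‖g n x‖ = |h x| * |min (lr P Q x) (τ n)| := by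
          simp [g, Real.norm_eq_abs, abs_mul]
      _ ≤ |h x| * lr P Q x := by
          exact mul_le_mul_of_nonneg_left h1 (abs_nonneg _)
      _ = (P.rnDeriv Q x).toReal • |h x| := by simp [lr, smul_eq_mul, mul_comm]
  have hIntg : ∀ n, 0 ≤ τ n → Integrable (g n) Q := by
    intro n hτ0
    exact hIntB.mono' (hgmeas n).aestronglyMeasurable
      (Filter.Eventually.of_forall (habs_le n hτ0))
  have hsq_le : ∀ n, 0 ≤ τ n → ∀ x,
      ‖(g n x) ^ 2‖ ≤ τ n * ((P.rnDeriv Q x).toReal • (h x) ^ 2) := by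
    intro n hτ0 x
    have hmin0 : 0 ≤ min (lr P Q x) (τ n) := le_min (hlr0 x) hτ0
    have hmin2 : (min (lr P Q x) (τ n)) ^ 2 ≤ lr P Q x * τ n := by
      calc (min (lr P Q x) (τ n)) ^ 2 = min (lr P Q x) (τ n) * min (lr P Q x) (τ n) := sq _
        _ ≤ lr P Q x * τ n :=
          mul_le_mul (min_le_left _ _) (min_le_right _ _) hmin0 (hlr0 x)
    calc ‖(g n x) ^ 2‖ = (h x) ^ 2 * (min (lr P Q x) (τ n)) ^ 2 := by
          rw [Real.norm_eq_abs, abs_of_nonneg (sq_nonneg _)]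
          simp [g, mul_pow]
      _ ≤ (h x) ^ 2 * (lr P Q x * τ n) := mul_le_mul_of_nonneg_left hmin2 (sq_nonneg _)
      _ = τ n * ((P.rnDeriv Q x).toReal • (h x) ^ 2) := by simp [lr, smul_eq_mul]; ring
  have hIntg2 : ∀ n, 0 ≤ τ n → Integrable (fun x => (g n x) ^ 2) Q := by
    intro n hτ0
    exact (hIntB2.const_mul (τ n)).mono' ((hgmeas n).pow_const 2).aestronglyMeasurable
      (Filter.Eventually.of_forall (hsq_le n hτ0))
  have hMemg : ∀ n, 0 ≤ τ n → MemLp (g n) 2 Q := by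
    intro n hτ0
    exact (memLp_two_iff_integrable_sq (hgmeas n).aestronglyMeasurable).2
      (by simpa using hIntg2 n hτ0)
  -- transfer along the random variables
  have hY_meas : ∀ n i, Measurable (fun ω => g n (Xs n i ω)) := fun n i =>
    (hgmeas n).comp (hXmeas n i)
  have hY_int : ∀ n, 0 ≤ τ n → ∀ i : Fin n, Integrable (fun ω => g n (Xs n i ω)) μ := by
    intro n hτ0 i
    have := hIntg n hτ0
    rw [← hid n i] at this
    exact (integrable_map_measure (hgmeas n).aestronglyMeasurable
      (hXmeas n i).aemeasurable).mp this
  have hY_eq : ∀ n, (i : Fin n) → ∫ ω, g n (Xs n i ω) ∂μ = ∫ x, g n x ∂Q := by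
    intro n i
    rw [← hid n i, integral_map (hXmeas n i).aemeasurable]
    rw [hid n i]
    exact (hgmeas n).aestronglyMeasurable
  have hY_sq_eq : ∀ n, (i : Fin n) → ∫ ω, (g n (Xs n i ω)) ^ 2 ∂μ = ∫ x, (g n x) ^ 2 ∂Q := by
    intro n i
    rw [← hid n i, integral_map (hXmeas n i).aemeasurable]
    rw [hid n i]
    exact ((hgmeas n).pow_const 2).aestronglyMeasurable
  have hY_mem : ∀ n, 0 ≤ τ n → ∀ i : Fin n, MemLp (fun ω => g n (Xs n i ω)) 2 μ := by
    intro n hτ0 i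
    have := hMemg n hτ0
    rw [← hid n i] at this
    exact (memLp_map_measure_iff (hgmeas n).aestronglyMeasurable
      (hXmeas n i).aemeasurable).mp this
  -- identification of the estimator's mean
  have hmean : ∀ n, 1 ≤ n → 0 ≤ τ n →
      ∫ ω, truLR P Q h n (Xs n) (τ n) ω ∂μ = ∫ x, g n x ∂Q := by
    intro n hn hτ0
    have : ∀ ω, truLR P Q h n (Xs n) (τ n) ω
        = (1 / (n : ℝ)) * ∑ i, g n (Xs n i ω) := fun ω => rfl
    simp_rw [this]
    rw [integral_const_mul, integral_finset_sum _ (fun i _ => hY_int n hτ0 i)]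
    have : ∑ i : Fin n, ∫ ω, g n (Xs n i ω) ∂μ = (n : ℝ) * ∫ x, g n x ∂Q := by
      simp_rw [hY_eq n]
      simp [Finset.sum_const]
    rw [this]
    have hn0 : (n : ℝ) ≠ 0 := by positivity
    field_simp
  -- Part 1: asymptotic unbiasedness
  have part1 : Tendsto (fun n => ∫ ω, truLR P Q h n (Xs n) (τ n) ω ∂μ) atTop (nhds m) := by
    have keylim : Tendsto (fun n => ∫ x, g n x ∂Q) atTop (nhds m) := by
      rw [show m = ∫ x, (P.rnDeriv Q x).toReal • h x ∂Q from
        (integral_rnDeriv_smul hPQ).symm]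
      refine (tendsto_add_atTop_iff_nat N).mp ?_
      refine tendsto_integral_of_dominated_convergence
        (fun x => (P.rnDeriv Q x).toReal • |h x|)
        (fun n => (hgmeas (n + N)).aestronglyMeasurable) hIntB
        (fun n => Filter.Eventually.of_forall
          (habs_le (n + N) (le_trans zero_le_one (hN (n + N) (Nat.le_add_left N n))))) ?_
      refine Filter.Eventually.of_forall fun x => ?_
      have : ∀ᶠ n in atTop, g (n + N) x = (P.rnDeriv Q x).toReal • h x := by
        have hev : ∀ᶠ n in (atTop : Filter ℕ), lr P Q x ≤ τ (n + N) := by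
          have := (hτ.comp (tendsto_add_atTop_nat N)).eventually_ge_atTop (lr P Q x)
          exact this
        filter_upwards [hev] with n hn
        rw [show g (n + N) x = h x * min (lr P Q x) (τ (n + N)) from rfl, min_eq_left hn]
        simp [lr, smul_eq_mul, mul_comm]
      exact Tendsto.congr' (this.mono fun n e => e.symm) tendsto_const_nhds
    refine keylim.congr' ?_
    filter_upwards [eventually_ge_atTop (max N 1)] with n hn
    exact (hmean n (le_trans (le_max_right N 1) hn)
      (le_trans zero_le_one (hN n (le_trans (le_max_left N 1) hn)))).symm
  -- variance bound
  have hvar_le : ∀ n, 1 ≤ n → 1 ≤ τ n →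
      variance (truLR P Q h n (Xs n) (τ n)) μ ≤ τ n / n * C := by
    intro n hn hτ1
    have hτ0 : (0:ℝ) ≤ τ n := le_trans zero_le_one hτ1
    have hfun : truLR P Q h n (Xs n) (τ n)
        = (1 / (n : ℝ)) • ∑ i, (fun ω => g n (Xs n i ω)) := by
      funext ω
      simp [truLR, g, Finset.sum_apply]
    rw [hfun, variance_smul]
    have hvs : variance (∑ i, (fun ω => g n (Xs n i ω))) μ
        = ∑ i : Fin n, variance (fun ω => g n (Xs n i ω)) μ := by
      refine IndepFun.variance_sum (fun i _ => hY_mem n hτ0 i) ?_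
      intro i _ j _ hij
      exact ((hindep n).indepFun hij).comp (hgmeas n) (hgmeas n)
    rw [hvs]
    have hvar_i : ∀ i : Fin n, variance (fun ω => g n (Xs n i ω)) μ ≤ τ n * C := by
      intro i
      calc variance (fun ω => g n (Xs n i ω)) μ
          ≤ ∫ ω, (g n (Xs n i ω)) ^ 2 ∂μ := by
            have := variance_le_expectation_sq (μ := μ)
              (X := fun ω => g n (Xs n i ω)) (hY_meas n i).aestronglyMeasurable
            simpa using this
        _ = ∫ x, (g n x) ^ 2 ∂Q := hY_sq_eq n i
        _ ≤ ∫ x, τ n * ((P.rnDeriv Q x).toReal • (h x) ^ 2) ∂Q := by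
            refine integral_mono (hIntg2 n hτ0) (hIntB2.const_mul (τ n)) fun x => ?_
            have := hsq_le n hτ0 x
            rwa [Real.norm_eq_abs, abs_of_nonneg (sq_nonneg _)] at this
        _ = τ n * C := by rw [integral_const_mul, hB2]
    calc (1 / (n:ℝ)) ^ 2 * ∑ i : Fin n, variance (fun ω => g n (Xs n i ω)) μ
        ≤ (1 / (n:ℝ)) ^ 2 * ∑ _i : Fin n, τ n * C := by
          refine mul_le_mul_of_nonneg_left (Finset.sum_le_sum fun i _ => hvar_i i) (by positivity)
      _ = (1 / (n:ℝ)) ^ 2 * ((n:ℝ) * (τ n * C)) := by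
          simp [Finset.sum_const, mul_comm]
      _ = τ n / n * C := by
          have hn0 : (n : ℝ) ≠ 0 := by
            simpa using Nat.one_le_iff_ne_zero.mp hn
          field_simp
  -- Part 2: variance tends to zero
  have part2 : Tendsto (fun n => variance (truLR P Q h n (Xs n) (τ n)) μ) atTop (nhds 0) := by
    refine squeeze_zero' (g := fun n => τ n / n * C) (Filter.Eventually.of_forall fun n => variance_nonneg _ _) ?_ ?_
    · filter_upwards [eventually_ge_atTop (max N 1)] with n hn
      exact hvar_le n (le_trans (le_max_right N 1) hn) (hN n (le_trans (le_max_left N 1) hn))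
    · simpa using hτn.mul_const C
  refine ⟨part1, part2, ?_⟩
  -- Part 3: convergence in probability via Chebyshev
  intro ε hε
  have hε2 : 0 < ε / 2 := by positivity
  have hSmem : ∀ n, 1 ≤ τ n → MemLp (truLR P Q h n (Xs n) (τ n)) 2 μ := by
    intro n hτ1
    have hfun : truLR P Q h n (Xs n) (τ n)
        = (1 / (n : ℝ)) • ∑ i, (fun ω => g n (Xs n i ω)) := by
      funext ω
      simp [truLR, g, Finset.sum_apply]
    rw [hfun]
    exact (memLp_finset_sum' _ (fun i _ => hY_mem n (le_trans zero_le_one hτ1) i)).const_smul _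
  -- eventual bound by Chebyshev
  have hbound : ∀ᶠ n in atTop,
      μ {ω | ε ≤ |truLR P Q h n (Xs n) (τ n) ω - m|}
        ≤ ENNReal.ofReal (variance (truLR P Q h n (Xs n) (τ n)) μ / (ε / 2) ^ 2) := by
    have hclose : ∀ᶠ n in atTop, |(∫ ω, truLR P Q h n (Xs n) (τ n) ω ∂μ) - m| ≤ ε / 2 := by
      have := part1
      rw [Metric.tendsto_atTop] at this
      obtain ⟨M, hM⟩ := this (ε / 2) hε2
      filter_upwards [eventually_ge_atTop M] with n hn
      exact le_of_lt (by simpa [Real.dist_eq] using hM n hn)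
    filter_upwards [hclose, eventually_ge_atTop N] with n hclose_n hnN
    have hsub : {ω | ε ≤ |truLR P Q h n (Xs n) (τ n) ω - m|}
        ⊆ {ω | ε / 2 ≤ |truLR P Q h n (Xs n) (τ n) ω
            - ∫ ω', truLR P Q h n (Xs n) (τ n) ω' ∂μ|} := by
      intro ω hω
      simp only [Set.mem_setOf_eq] at hω ⊢
      have htri : |truLR P Q h n (Xs n) (τ n) ω - m|
          ≤ |truLR P Q h n (Xs n) (τ n) ω - ∫ ω', truLR P Q h n (Xs n) (τ n) ω' ∂μ|
            + |(∫ ω', truLR P Q h n (Xs n) (τ n) ω' ∂μ) - m| := abs_sub_le _ _ _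
      nlinarith [abs_nonneg (truLR P Q h n (Xs n) (τ n) ω - m)]
    calc μ {ω | ε ≤ |truLR P Q h n (Xs n) (τ n) ω - m|}
        ≤ μ {ω | ε / 2 ≤ |truLR P Q h n (Xs n) (τ n) ω
            - ∫ ω', truLR P Q h n (Xs n) (τ n) ω' ∂μ|} := measure_mono hsub
      _ ≤ ENNReal.ofReal (variance (truLR P Q h n (Xs n) (τ n)) μ / (ε / 2) ^ 2) :=
          meas_ge_le_variance_div_sq (hSmem n (hN n hnN)) hε2
  -- squeeze in ℝ≥0∞
  have hlim : Tendsto (fun n =>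
      ENNReal.ofReal (variance (truLR P Q h n (Xs n) (τ n)) μ / (ε / 2) ^ 2)) atTop (nhds 0) := by
    have : Tendsto (fun n => variance (truLR P Q h n (Xs n) (τ n)) μ / (ε / 2) ^ 2) atTop
        (nhds 0) := by
      simpa using part2.div_const ((ε / 2) ^ 2)
    simpa using ENNReal.tendsto_ofReal this
  exact tendsto_of_tendsto_of_tendsto_of_le_of_le' tendsto_const_nhds hlim
    (Filter.Eventually.of_forall fun n => zero_le) hbound
end

section
/- If ‖h‖_{p,Q} < ∞ for some p > 2 and I_α(P‖Q) < ∞ for some α ∈ (p/(p−1), 2p/(p−2)), then the truncation bias satisfies |E_Q[h·min(l,τ)] − E_P[h]| ≤ ‖h‖_{p,Q} · τ^{1−α+α/p} · I_α(P‖Q)^{1−1/p} for any τ > 0. -/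
open MeasureTheory

/-- Bias bound for the truncated likelihood-ratio estimator under the `p`-norm:
`|E_Q[h·min(l,τ)] − E_P[h]| ≤ ‖h‖_{p,Q} τ^{1−α+α/p} I_α(P‖Q)^{1−1/p}`. -/
theorem truncated_lr_bias_bound_pNorm
    {X : Type*} [MeasurableSpace X]
    (P Q : Measure X) [IsProbabilityMeasure P] [IsProbabilityMeasure Q]
    (hPQ : P ≪ Q) (h : X → ℝ) (hmeas : Measurable h)
    (p : ℝ) (hp : 2 < p) (hpnorm : Integrable (fun x => |h x| ^ p) Q)
    (α : ℝ) (hα1 : p / (p - 1) < α) (hα2 : α < 2 * p / (p - 2))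
    (hI : Integrable (fun x => lr P Q x ^ α) Q)
    (τ : ℝ) (hτ : 0 < τ) :
    |(∫ x, h x * min (lr P Q x) τ ∂Q) - ∫ x, h x ∂P| ≤
      pNorm h p Q * τ ^ (1 - α + α / p) * Ialpha P Q α ^ (1 - 1 / p) := by
  have hp1 : 1 < p := by linarith
  have hp0 : 0 < p := by linarith
  set l : X → ℝ := lr P Q with hl_def
  set q : ℝ := p / (p - 1) with hq_def
  have hconj : p.HolderConjugate q :=
    (Real.holderConjugate_iff_eq_conjExponent hp1).mpr rfl
  have hq1 : 1 < q := (Real.HolderConjugate.symm hconj).lt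
  have hq0 : 0 < q := hconj.symm.pos
  have hqα : q < α := hα1
  have hα0 : 0 < α := lt_trans hq0 hqα
  have hl_nonneg : ∀ x, 0 ≤ l x := fun x => ENNReal.toReal_nonneg
  have hl_meas : Measurable l := (Measure.measurable_rnDeriv P Q).ennreal_toReal
  -- membership in L^p for h
  have hpne : (ENNReal.ofReal p) ≠ 0 := (ENNReal.ofReal_pos.mpr hp0).ne'
  have hmemh : MemLp h (ENNReal.ofReal p) Q := by
    rw [← memLp_norm_rpow_iff hmeas.aestronglyMeasurable hpne ENNReal.ofReal_ne_top]
    rw [ENNReal.div_self hpne ENNReal.ofReal_ne_top,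
      memLp_one_iff_integrable]
    simpa [ENNReal.toReal_ofReal hp0.le, Real.norm_eq_abs] using hpnorm
  have hInt_h : Integrable h Q := hmemh.integrable (by
    rw [← ENNReal.ofReal_one]; exact ENNReal.ofReal_le_ofReal hp1.le)
  -- g is the truncation error
  set g : X → ℝ := fun x => l x - min (l x) τ with hg_def
  have hg_nonneg : ∀ x, 0 ≤ g x := fun x => by
    simp only [hg_def, sub_nonneg]; exact min_le_left _ _
  have hg_meas : Measurable g := hl_meas.sub (hl_meas.min measurable_const)
  -- pointwise bound on g^q
  have hg_bound : ∀ x, g x ^ q ≤ τ ^ (q - α) * l x ^ α := by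
    intro x
    rcases le_or_gt (l x) τ with hx | hx
    · have : g x = 0 := by simp [hg_def, min_eq_left hx]
      rw [this, Real.zero_rpow hq0.ne']
      exact mul_nonneg (Real.rpow_nonneg hτ.le _) (Real.rpow_nonneg (hl_nonneg x) _)
    · have hlx : 0 < l x := lt_trans hτ hx
      have hgx : g x = l x - τ := by simp [hg_def, min_eq_right hx.le]
      have h1 : g x ^ q ≤ l x ^ q := by
        rw [hgx]
        exact Real.rpow_le_rpow (by linarith) (by linarith) hq0.le
      have h2 : l x ^ q = l x ^ α * l x ^ (q - α) := by
        rw [← Real.rpow_add hlx]; ring_nf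
      have h3 : l x ^ (q - α) ≤ τ ^ (q - α) :=
        Real.rpow_le_rpow_of_nonpos hτ hx.le (by linarith)
      calc g x ^ q ≤ l x ^ α * l x ^ (q - α) := h2 ▸ h1
        _ ≤ l x ^ α * τ ^ (q - α) :=
          mul_le_mul_of_nonneg_left h3 (Real.rpow_nonneg (hl_nonneg x) α)
        _ = τ ^ (q - α) * l x ^ α := mul_comm _ _
  -- integrability of g^q
  have hInt_gq : Integrable (fun x => g x ^ q) Q := by
    refine Integrable.mono' (hI.const_mul (τ ^ (q - α)))
      ((hg_meas.pow_const q).aestronglyMeasurable) (ae_of_all _ fun x => ?_)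
    rw [Real.norm_eq_abs, abs_of_nonneg (Real.rpow_nonneg (hg_nonneg x) q)]
    exact hg_bound x
  -- membership in L^q for g
  have hqne : (ENNReal.ofReal q) ≠ 0 := (ENNReal.ofReal_pos.mpr hq0).ne'
  have hmemg : MemLp g (ENNReal.ofReal q) Q := by
    rw [← memLp_norm_rpow_iff hg_meas.aestronglyMeasurable hqne ENNReal.ofReal_ne_top]
    rw [ENNReal.div_self hqne ENNReal.ofReal_ne_top,
      memLp_one_iff_integrable]
    refine (integrable_congr (ae_of_all _ fun x => ?_)).mpr hInt_gq
    rw [ENNReal.toReal_ofReal hq0.le, Real.norm_eq_abs, abs_of_nonneg (hg_nonneg x)]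
  -- integrability of h * min(l, τ)
  have hInt_A : Integrable (fun x => h x * min (l x) τ) Q := by
    refine Integrable.mono' (hInt_h.abs.const_mul τ)
      ((hmeas.mul (hl_meas.min measurable_const)).aestronglyMeasurable)
      (ae_of_all _ fun x => ?_)
    rw [Real.norm_eq_abs, abs_mul]
    have h1 : |min (l x) τ| ≤ τ := by
      rw [abs_of_nonneg (le_min (hl_nonneg x) hτ.le)]
      exact min_le_right _ _
    calc |h x| * |min (l x) τ| ≤ |h x| * τ :=
          mul_le_mul_of_nonneg_left h1 (abs_nonneg _)
      _ = τ * |h x| := mul_comm _ _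
  -- integrability of h * l (via Young's inequality)
  have hInt_B : Integrable (fun x => h x * l x) Q := by
    refine Integrable.mono' ((hpnorm.add ((integrable_const (1:ℝ)).add hI)))
      ((hmeas.mul hl_meas).aestronglyMeasurable) (ae_of_all _ fun x => ?_)
    rw [Real.norm_eq_abs, abs_mul, abs_of_nonneg (hl_nonneg x)]
    have hy : |h x| * l x ≤ |h x| ^ p / p + l x ^ q / q :=
      Real.young_inequality_of_nonneg (abs_nonneg _) (hl_nonneg x) hconj
    have h1 : |h x| ^ p / p ≤ |h x| ^ p :=
      div_le_self (Real.rpow_nonneg (abs_nonneg _) p) hp1.le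
    have h2 : l x ^ q / q ≤ l x ^ q :=
      div_le_self (Real.rpow_nonneg (hl_nonneg x) q) hq1.le
    have h3 : l x ^ q ≤ 1 + l x ^ α := by
      rcases le_or_gt (l x) 1 with hx | hx
      · have := Real.rpow_le_one (hl_nonneg x) hx hq0.le
        have : l x ^ q ≤ 1 := this
        have h4 : 0 ≤ l x ^ α := Real.rpow_nonneg (hl_nonneg x) α
        linarith
      · have h4 : l x ^ q ≤ l x ^ α :=
          Real.rpow_le_rpow_of_exponent_le hx.le hqα.le
        linarith
    simp only [Pi.add_apply]
    linarith
  -- rewrite E_P[h]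
  have hEP : ∫ x, h x ∂P = ∫ x, h x * l x ∂Q := by
    rw [← integral_rnDeriv_smul hPQ (f := h)]
    refine integral_congr_ae (ae_of_all _ fun x => ?_)
    simp [hl_def, lr, smul_eq_mul, mul_comm]
  -- the bias as a single integral
  have hdiff : (∫ x, h x * min (l x) τ ∂Q) - ∫ x, h x ∂P
      = ∫ x, -(h x * g x) ∂Q := by
    rw [hEP, ← integral_sub hInt_A hInt_B]
    refine integral_congr_ae (ae_of_all _ fun x => ?_)
    simp only [hg_def]; ring
  have hInt_hg : Integrable (fun x => h x * g x) Q := by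
    have : (fun x => h x * g x) = fun x => h x * l x - h x * min (l x) τ := by
      funext x; simp only [hg_def]; ring
    rw [this]; exact hInt_B.sub hInt_A
  -- bound the bias by ∫ |h| * g
  have habs : |(∫ x, h x * min (l x) τ ∂Q) - ∫ x, h x ∂P| ≤ ∫ x, |h x| * g x ∂Q := by
    rw [hdiff, integral_neg, abs_neg, ← Real.norm_eq_abs]
    refine (norm_integral_le_integral_norm _).trans_eq ?_
    refine integral_congr_ae (ae_of_all _ fun x => ?_)
    simp only [Real.norm_eq_abs, abs_mul, abs_of_nonneg (hg_nonneg x)]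
  -- Hölder
  have hholder : ∫ x, |h x| * g x ∂Q ≤
      (∫ x, |h x| ^ p ∂Q) ^ (1 / p) * (∫ x, g x ^ q ∂Q) ^ (1 / q) := by
    refine integral_mul_le_Lp_mul_Lq_of_nonneg hconj (ae_of_all _ fun x => abs_nonneg _)
      (ae_of_all _ fun x => hg_nonneg x) ?_ hmemg
    simpa [Real.norm_eq_abs] using hmemh.norm
  -- bound on ∫ g^q
  have hIα_nonneg : 0 ≤ Ialpha P Q α :=
    integral_nonneg fun x => Real.rpow_nonneg (hl_nonneg x) α
  have hgq_int_bound : ∫ x, g x ^ q ∂Q ≤ τ ^ (q - α) * Ialpha P Q α := by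
    rw [Ialpha, ← integral_const_mul]
    exact integral_mono hInt_gq (hI.const_mul _) hg_bound
  have hgq_nonneg : 0 ≤ ∫ x, g x ^ q ∂Q :=
    integral_nonneg fun x => Real.rpow_nonneg (hg_nonneg x) q
  have hstep : (∫ x, g x ^ q ∂Q) ^ (1 / q) ≤
      τ ^ (1 - α + α / p) * Ialpha P Q α ^ (1 - 1 / p) := by
    have h1 : (∫ x, g x ^ q ∂Q) ^ (1 / q) ≤ (τ ^ (q - α) * Ialpha P Q α) ^ (1 / q) :=
      Real.rpow_le_rpow hgq_nonneg hgq_int_bound (by positivity)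
    have h2 : (τ ^ (q - α) * Ialpha P Q α) ^ (1 / q)
        = τ ^ ((q - α) * (1 / q)) * Ialpha P Q α ^ (1 / q) := by
      rw [Real.mul_rpow (Real.rpow_nonneg hτ.le _) hIα_nonneg, ← Real.rpow_mul hτ.le]
    have hpne' : p ≠ 0 := hp0.ne'
    have hpm1 : p - 1 ≠ 0 := by intro hc; rw [sub_eq_zero] at hc; linarith
    have h3 : (q - α) * (1 / q) = 1 - α + α / p := by
      rw [hq_def]
      field_simp
      ring
    have h4 : 1 / q = 1 - 1 / p := by
      rw [hq_def, one_div_div]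
      field_simp
    rw [h2, h3] at h1
    rw [h4] at h1 ⊢
    exact h1
  have hpN_nonneg : 0 ≤ pNorm h p Q := by
    rw [pNorm]
    exact Real.rpow_nonneg (integral_nonneg fun x => Real.rpow_nonneg (abs_nonneg _) p) _
  calc |(∫ x, h x * min (l x) τ ∂Q) - ∫ x, h x ∂P|
      ≤ ∫ x, |h x| * g x ∂Q := habs
    _ ≤ pNorm h p Q * (∫ x, g x ^ q ∂Q) ^ (1 / q) := by rw [pNorm]; exact hholder
    _ ≤ pNorm h p Q * (τ ^ (1 - α + α / p) * Ialpha P Q α ^ (1 - 1 / p)) :=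
        mul_le_mul_of_nonneg_left hstep hpN_nonneg
    _ = pNorm h p Q * τ ^ (1 - α + α / p) * Ialpha P Q α ^ (1 - 1 / p) := by ring
end

section
/- If ‖h‖_{p,Q} < ∞ for some p > 2 and I_α(P‖Q) < ∞ for some α ∈ (p/(p−1), 2p/(p−2)), then for i.i.d. X̃_i ∼ Q, Var((1/n)∑ h(X̃_i)min(l(X̃_i),τ)) ≤ (1/n) ‖h‖²_{p,Q} · τ^{2−α+2α/p} · I_α(P‖Q)^{1−2/p}. -/
open MeasureTheory ProbabilityTheory

lemma variance_comp_map' {Ω X : Type*} [MeasurableSpace Ω] [MeasurableSpace X]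
    (μ : Measure Ω) (T : Ω → X) (hT : Measurable T) (f : X → ℝ) (hf : Measurable f) :
    variance (fun ω => f (T ω)) μ = variance f (Measure.map T μ) := by
  rw [variance, variance, evariance, evariance,
    integral_map hT.aemeasurable hf.aestronglyMeasurable,
    lintegral_map (by measurability) hT]

/-- Variance bound for the truncated likelihood-ratio estimator under the `p`-norm:
`Var((1/n)∑ h(X̃ᵢ)min(l(X̃ᵢ),τ)) ≤ (1/n)‖h‖²_{p,Q} τ^{2−α+2α/p} I_α(P‖Q)^{1−2/p}`. -/
theorem truncated_lr_variance_bound_pNorm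
    {X : Type*} [MeasurableSpace X] {Ω : Type*} [MeasurableSpace Ω]
    (P Q : Measure X) [IsProbabilityMeasure P] [IsProbabilityMeasure Q]
    (hPQ : P ≪ Q) (h : X → ℝ) (hmeas : Measurable h)
    (p : ℝ) (hp : 2 < p) (hpnorm : Integrable (fun x => |h x| ^ p) Q)
    (α : ℝ) (hα1 : p / (p - 1) < α) (hα2 : α < 2 * p / (p - 2))
    (hI : Integrable (fun x => lr P Q x ^ α) Q)
    (τ : ℝ) (hτ : 0 < τ)
    (μ : Measure Ω) [IsProbabilityMeasure μ]
    (n : ℕ) (hn : 0 < n) (Xs : Fin n → Ω → X)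
    (hXmeas : ∀ i, Measurable (Xs i))
    (hid : ∀ i, Measure.map (Xs i) μ = Q)
    (hindep : iIndepFun Xs μ) :
    variance (fun ω => (1 / (n : ℝ)) * ∑ i, h (Xs i ω) * min (lr P Q (Xs i ω)) τ) μ ≤
      (1 / (n : ℝ)) * pNorm h p Q ^ 2 * τ ^ (2 - α + 2 * α / p) *
        Ialpha P Q α ^ (1 - 2 / p) := by
  have hp0 : (0 : ℝ) < p := by linarith
  have hp2 : (0 : ℝ) < p - 2 := by linarith
  have hα0 : (0 : ℝ) < α := lt_trans (div_pos hp0 (by linarith)) hα1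
  have hq2 : (0 : ℝ) < p / (p - 2) := div_pos hp0 hp2
  have hc0 : (0 : ℝ) < 2 * (p / (p - 2)) - α := by
    have : 2 * p / (p - 2) = 2 * (p / (p - 2)) := by ring
    linarith [this ▸ hα2]
  set l : X → ℝ := lr P Q with hl_def
  have hl_meas : Measurable l := (Measure.measurable_rnDeriv P Q).ennreal_toReal
  have hl_nonneg : ∀ x, 0 ≤ l x := fun x => ENNReal.toReal_nonneg
  set m : X → ℝ := fun x => min (l x) τ with hm_def
  have hm_meas : Measurable m := hl_meas.min measurable_const
  have hm_nonneg : ∀ x, 0 ≤ m x := fun x => le_min (hl_nonneg x) hτ.le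
  have hm_le_τ : ∀ x, m x ≤ τ := fun x => min_le_right _ _
  have hm_le_l : ∀ x, m x ≤ l x := fun x => min_le_left _ _
  set f : X → ℝ := fun x => h x * m x with hf_def
  have hf_meas : Measurable f := hmeas.mul hm_meas
  have hq0' : ENNReal.ofReal p ≠ 0 := by simp [ENNReal.ofReal_eq_zero]; linarith
  have hqt' : ENNReal.ofReal p ≠ ⊤ := ENNReal.ofReal_ne_top
  -- MemLp facts
  have hhp : MemLp h (ENNReal.ofReal p) Q := by
    refine (memLp_norm_rpow_iff (p := ENNReal.ofReal p) (q := ENNReal.ofReal p)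
      hmeas.aestronglyMeasurable hq0' hqt').mp ?_
    rw [ENNReal.div_self hq0' hqt', memLp_one_iff_integrable]
    simpa [ENNReal.toReal_ofReal hp0.le, Real.norm_eq_abs] using hpnorm
  have h2p : (2 : ENNReal) ≤ ENNReal.ofReal p := by
    rw [show ((2 : ENNReal)) = ENNReal.ofReal 2 by simp]
    exact ENNReal.ofReal_le_ofReal hp.le
  have hh2 : MemLp h 2 Q := hhp.mono_exponent h2p
  have hf2 : MemLp f 2 Q := by
    refine (hh2.const_mul τ).of_le hf_meas.aestronglyMeasurable ?_
    refine Filter.Eventually.of_forall fun x => ?_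
    simp only [Real.norm_eq_abs, hf_def, abs_mul]
    calc |h x| * |m x| ≤ |h x| * τ := by
          refine mul_le_mul_of_nonneg_left ?_ (abs_nonneg _)
          rw [abs_of_nonneg (hm_nonneg x)]; exact hm_le_τ x
      _ = |τ| * |h x| := by rw [abs_of_nonneg hτ.le, mul_comm]
  -- Step A : variance reduction
  have hsum_eq : (fun ω => ∑ i, f (Xs i ω)) = ∑ i, (fun ω => f (Xs i ω)) := by
    ext ω; simp
  have hfXi : ∀ i, MemLp (fun ω => f (Xs i ω)) 2 μ := fun i =>
    (memLp_map_measure_iff (f := Xs i) (g := f) (μ := μ) (p := 2)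
      (by rw [hid i]; exact hf_meas.aestronglyMeasurable) (hXmeas i).aemeasurable).mp
      (by rw [hid i]; exact hf2)
  have hvar_sum : variance (fun ω => ∑ i, f (Xs i ω)) μ
      = ∑ i : Fin n, variance (fun ω => f (Xs i ω)) μ := by
    rw [hsum_eq]
    exact IndepFun.variance_sum (fun i _ => hfXi i)
      (fun i _ j _ hij => (hindep.indepFun hij).comp hf_meas hf_meas)
  have hvar_i : ∀ i : Fin n, variance (fun ω => f (Xs i ω)) μ = variance f Q := fun i => by
    rw [variance_comp_map' μ (Xs i) (hXmeas i) f hf_meas, hid i]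
  have hvarA : variance (fun ω => (1 / (n : ℝ)) * ∑ i, f (Xs i ω)) μ
      = (1 / (n : ℝ)) * ((1 / (n : ℝ)) * ((n : ℝ) * variance f Q)) := by
    rw [variance_const_mul, hvar_sum]
    simp only [hvar_i, Finset.sum_const, Finset.card_univ, Fintype.card_fin, nsmul_eq_mul]
    ring
  -- Step B : variance ≤ second moment
  have hvarB : variance f Q ≤ ∫ x, f x ^ 2 ∂Q := by
    have := variance_le_expectation_sq (μ := Q) hf_meas.aestronglyMeasurable
    simpa using this
  -- Step C : Hölder
  have hconj : Real.HolderConjugate (p / 2) (p / (p - 2)) := by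
    refine ⟨?_, by linarith, hq2⟩
    rw [inv_div, inv_div, inv_one, ← add_div, show 2 + (p - 2) = p by ring,
      div_self hp0.ne']
  have hh2' : MemLp (fun x => h x ^ 2) (ENNReal.ofReal (p / 2)) Q := by
    have key := (memLp_norm_rpow_iff (p := ENNReal.ofReal p) (q := (2 : ENNReal))
      hmeas.aestronglyMeasurable (by norm_num) (by norm_num)).mpr hhp
    have heq : ENNReal.ofReal p / 2 = ENNReal.ofReal (p / 2) := by
      rw [ENNReal.ofReal_div_of_pos (by norm_num)]
      norm_num
    rw [heq] at key
    have hfun : (fun x => ‖h x‖ ^ (2 : ENNReal).toReal) = fun x => h x ^ 2 := by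
      ext x
      rw [show ((2 : ENNReal)).toReal = ((2 : ℕ) : ℝ) by simp, Real.rpow_natCast]
      simp [sq_abs]
    rwa [hfun] at key
  have hm2 : MemLp (fun x => m x ^ 2) (ENNReal.ofReal (p / (p - 2))) Q := by
    refine MemLp.of_bound ((hm_meas.pow_const 2).aestronglyMeasurable) (τ ^ 2) ?_
    refine Filter.Eventually.of_forall fun x => ?_
    rw [Real.norm_eq_abs, abs_of_nonneg (sq_nonneg _)]
    exact pow_le_pow_left₀ (hm_nonneg x) (hm_le_τ x) 2
  have holder : ∫ x, (h x ^ 2) * (m x ^ 2) ∂Q ≤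
      (∫ x, (h x ^ 2) ^ (p / 2) ∂Q) ^ (1 / (p / 2)) *
        (∫ x, (m x ^ 2) ^ (p / (p - 2)) ∂Q) ^ (1 / (p / (p - 2))) :=
    integral_mul_le_Lp_mul_Lq_of_nonneg hconj
      (Filter.Eventually.of_forall fun x => sq_nonneg _)
      (Filter.Eventually.of_forall fun x => sq_nonneg _) hh2' hm2
  -- identify the first factor
  set A : ℝ := ∫ x, |h x| ^ p ∂Q with hA_def
  have hA_nonneg : 0 ≤ A := integral_nonneg fun x => by positivity
  have hfact1 : (∫ x, (h x ^ 2) ^ (p / 2) ∂Q) ^ (1 / (p / 2)) = pNorm h p Q ^ 2 := by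
    have : (fun x => (h x ^ 2) ^ (p / 2)) = fun x => |h x| ^ p := by
      ext x
      rw [← sq_abs, ← Real.rpow_natCast |h x| 2, ← Real.rpow_mul (abs_nonneg _)]
      congr 1
      push_cast; ring
    rw [this, pNorm, ← Real.rpow_natCast (A ^ (1 / p)) 2, ← Real.rpow_mul hA_nonneg]
    rw [show (1 : ℝ) / (p / 2) = 1 / p * (2 : ℕ) by push_cast; field_simp]
  -- bound the second factor
  have hIα_nonneg : 0 ≤ Ialpha P Q α := integral_nonneg fun x =>
    Real.rpow_nonneg (hl_nonneg x) α
  have hpt : ∀ x, (m x ^ 2) ^ (p / (p - 2)) ≤ τ ^ (2 * (p / (p - 2)) - α) * l x ^ α := by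
    intro x
    have hmx := hm_nonneg x
    have hexp : (m x ^ 2) ^ (p / (p - 2)) = m x ^ (2 * (p / (p - 2))) := by
      rw [← Real.rpow_natCast (m x) 2, ← Real.rpow_mul hmx]
      norm_num
    rw [hexp]
    rcases eq_or_lt_of_le hmx with hz | hpos
    · rw [← hz, Real.zero_rpow (by positivity)]
      exact mul_nonneg (Real.rpow_nonneg hτ.le _) (Real.rpow_nonneg (hl_nonneg x) _)
    · have hsplit : m x ^ (2 * (p / (p - 2))) =
          m x ^ (2 * (p / (p - 2)) - α) * m x ^ α := by
        rw [← Real.rpow_add hpos]; ring_nf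
      rw [hsplit]
      refine mul_le_mul ?_ ?_ (Real.rpow_nonneg hmx _) (Real.rpow_nonneg hτ.le _)
      · exact Real.rpow_le_rpow hmx (hm_le_τ x) hc0.le
      · exact Real.rpow_le_rpow hmx (hm_le_l x) hα0.le
  have hS : ∫ x, (m x ^ 2) ^ (p / (p - 2)) ∂Q ≤
      τ ^ (2 * (p / (p - 2)) - α) * Ialpha P Q α := by
    rw [Ialpha, ← integral_const_mul]
    refine integral_mono_of_nonneg (Filter.Eventually.of_forall fun x => by positivity)
      (hI.const_mul _) (Filter.Eventually.of_forall hpt)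
  have hfact2 : (∫ x, (m x ^ 2) ^ (p / (p - 2)) ∂Q) ^ (1 / (p / (p - 2))) ≤
      τ ^ (2 - α + 2 * α / p) * Ialpha P Q α ^ (1 - 2 / p) := by
    have hS0 : 0 ≤ ∫ x, (m x ^ 2) ^ (p / (p - 2)) ∂Q :=
      integral_nonneg fun x => Real.rpow_nonneg (sq_nonneg _) _
    calc (∫ x, (m x ^ 2) ^ (p / (p - 2)) ∂Q) ^ (1 / (p / (p - 2)))
        ≤ (τ ^ (2 * (p / (p - 2)) - α) * Ialpha P Q α) ^ (1 / (p / (p - 2))) :=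
          Real.rpow_le_rpow hS0 hS (by positivity)
      _ = τ ^ (2 - α + 2 * α / p) * Ialpha P Q α ^ (1 - 2 / p) := by
          rw [Real.mul_rpow (Real.rpow_nonneg hτ.le _) hIα_nonneg,
            ← Real.rpow_mul hτ.le]
          congr 1
          · congr 1; field_simp; ring
          · congr 1; field_simp
  -- combine
  have hsq : ∫ x, f x ^ 2 ∂Q ≤ pNorm h p Q ^ 2 * (τ ^ (2 - α + 2 * α / p) *
      Ialpha P Q α ^ (1 - 2 / p)) := by
    have : (fun x => f x ^ 2) = fun x => (h x ^ 2) * (m x ^ 2) := by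
      ext x; simp [hf_def]; ring
    rw [this]
    calc ∫ x, (h x ^ 2) * (m x ^ 2) ∂Q
        ≤ (∫ x, (h x ^ 2) ^ (p / 2) ∂Q) ^ (1 / (p / 2)) *
          (∫ x, (m x ^ 2) ^ (p / (p - 2)) ∂Q) ^ (1 / (p / (p - 2))) := holder
      _ ≤ pNorm h p Q ^ 2 * (τ ^ (2 - α + 2 * α / p) * Ialpha P Q α ^ (1 - 2 / p)) := by
          rw [hfact1]
          refine mul_le_mul_of_nonneg_left hfact2 ?_
          positivity
  have hvar_nonneg : 0 ≤ variance f Q := variance_nonneg _ _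
  calc variance (fun ω => (1 / (n : ℝ)) * ∑ i, h (Xs i ω) * min (lr P Q (Xs i ω)) τ) μ
      = (1 / (n : ℝ)) * ((1 / (n : ℝ)) * ((n : ℝ) * variance f Q)) := hvarA
    _ = (1 / (n : ℝ)) * variance f Q := by
        have hn' : (n : ℝ) ≠ 0 := Nat.cast_ne_zero.mpr hn.ne'
        field_simp
    _ ≤ (1 / (n : ℝ)) * (pNorm h p Q ^ 2 * (τ ^ (2 - α + 2 * α / p) *
          Ialpha P Q α ^ (1 - 2 / p))) := by
        refine mul_le_mul_of_nonneg_left (le_trans hvarB hsq) (by positivity)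
    _ = (1 / (n : ℝ)) * pNorm h p Q ^ 2 * τ ^ (2 - α + 2 * α / p) *
          Ialpha P Q α ^ (1 - 2 / p) := by ring
end
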